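/- arXiv:math/0505259 — 5 statements merged into one kernel-verified Lean document; each statement's English description precedes it below -/
import Mathlib

section
/- Depoissonization lemma: let (a_n)_{n≥0} be real numbers such that the power series ∑_{j=0}^∞ a_j z^j/j! defines an entire function, and set P(z) = e^{−z} ∑_{j=0}^∞ a_j z^j/j!. Fix θ ∈ (0, π/2) and let S_θ = {z ∈ ℂ : |arg z| ≤ θ}. Suppose there exist constants α ∈ (0,1), β₁ > 0, β₂ > 0, c > 0 and z₀ > 0 such that (i) |P(z)| ≤ β₁|z|^c for all z ∈ S_θ with |z| ≥ z₀, and (ii) |P(z)e^z| ≤ β₂|z|^c e^{α|z|} for all z ∉ S_θ with |z| ≥ z₀. Then a_n = P(n) + O(n^{c−1/2} ln n): there exist C > 0 and n₀ such that |a_n − P(n)| ≤ C·n^{c−1/2}·ln n for all n ≥ n₀. -/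
open MeasureTheory Filter
open scoped Topology

noncomputable section

open MeasureTheory Filter Complex Set
open scoped Real Topology

set_option maxHeartbeats 1000000




lemma coeff_integral (g : ℕ → ℂ) (G : ℂ → ℂ)
    (hG : ∀ z : ℂ, HasSum (fun j : ℕ => g j * z ^ j / (j.factorial : ℂ)) (G z))
    (R : ℝ) (hR : 0 < R) (n : ℕ) :
    ∫ t in Ioc (-π) π, G (R * Complex.exp (t * Complex.I)) *
        Complex.exp (-(n:ℂ) * t * Complex.I) =
      (2 * π) * (g n * (R:ℂ) ^ n / n.factorial) := by
  set Fj : ℕ → ℝ → ℂ := fun j t =>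
    (g j * ((R:ℂ) * Complex.exp (t * Complex.I)) ^ j / (j.factorial : ℂ)) *
      Complex.exp (-(n:ℂ) * t * Complex.I) with hFj
  have hcont : ∀ j, Continuous (Fj j) := by
    intro j
    fun_prop
  have hint : ∀ j, Integrable (Fj j) (volume.restrict (Ioc (-π) π)) := fun j =>
    ((hcont j).integrableOn_Ioc : IntegrableOn (Fj j) (Ioc (-π) π) volume)
  have hnorm : ∀ j t, ‖Fj j t‖ = ‖g j‖ * R ^ j / (j.factorial : ℝ) := by
    intro j t
    have h1 : ‖Complex.exp (t * Complex.I)‖ = 1 := by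
      simpa using Complex.norm_exp_ofReal_mul_I t
    have h2 : ‖Complex.exp (-(n:ℂ) * t * Complex.I)‖ = 1 := by
      have : (-(n:ℂ) * t * Complex.I) = ((-(n:ℝ) * t : ℝ) : ℂ) * Complex.I := by
        push_cast; ring
      rw [this]
      simpa using Complex.norm_exp_ofReal_mul_I (-(n:ℝ) * t)
    simp only [hFj, norm_mul, norm_div, norm_pow, h2, mul_one,
      Complex.norm_natCast]
    rw [h1, mul_one, Complex.norm_real, Real.norm_eq_abs, abs_of_pos hR]
  have hS : Summable fun j => ‖g j‖ * R ^ j / (j.factorial : ℝ) := by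
    have := (hG (R : ℂ)).summable
    have h := summable_norm_iff.mpr this
    convert h using 2 with j
    rw [norm_div, norm_mul, norm_pow]
    simp [Complex.norm_real, abs_of_pos hR]
  have hsum_int : Summable fun j => ∫ t, ‖Fj j t‖ ∂(volume.restrict (Ioc (-π) π)) := by
    have : (fun j => ∫ t, ‖Fj j t‖ ∂(volume.restrict (Ioc (-π) π))) =
        fun j => (2 * π) * (‖g j‖ * R ^ j / (j.factorial : ℝ)) := by
      funext j
      simp only [hnorm]
      rw [integral_const]
      rw [measureReal_restrict_apply_univ, Real.volume_real_Ioc,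
        max_eq_left (by linarith [Real.pi_pos])]
      rw [smul_eq_mul]
      ring
    rw [this]
    exact hS.mul_left _
  have hkey := MeasureTheory.hasSum_integral_of_summable_integral_norm hint hsum_int
  have htsum : ∀ t : ℝ, (∑' j, Fj j t) =
      G ((R:ℂ) * Complex.exp (t * Complex.I)) * Complex.exp (-(n:ℂ) * t * Complex.I) := by
    intro t
    exact ((hG _).mul_right _).tsum_eq
  have hFj' : ∀ j (t : ℝ), Fj j t =
      (g j * (R:ℂ) ^ j / (j.factorial : ℂ)) *
        Complex.exp (((j:ℂ) - n) * t * Complex.I) := by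
    intro j t
    rw [hFj]
    simp only [mul_pow, ← Complex.exp_nat_mul]
    rw [show ((j:ℂ) - n) * t * Complex.I
        = (j:ℂ) * ((t:ℂ) * Complex.I) + (-(n:ℂ) * t * Complex.I) by ring,
      Complex.exp_add]
    ring
  have hIj : (fun j => ∫ t, Fj j t ∂(volume.restrict (Ioc (-π) π))) =
      fun j => if j = n then (2 * (π:ℝ)) * (g n * (R:ℂ) ^ n / n.factorial) else 0 := by
    funext j
    simp only [hFj']
    rw [MeasureTheory.integral_const_mul]
    by_cases hj : j = n
    · subst hj
      simp only [sub_self, zero_mul, Complex.exp_zero, if_true]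
      rw [MeasureTheory.integral_const]
      rw [measureReal_restrict_apply_univ, Real.volume_real_Ioc,
        max_eq_left (by linarith [Real.pi_pos])]
      rw [real_smul]
      push_cast
      ring
    · simp only [hj, if_false]
      have hc : ((j:ℂ) - n) * Complex.I ≠ 0 := by
        simp only [ne_eq, mul_eq_zero, Complex.I_ne_zero, or_false, sub_eq_zero]
        exact_mod_cast hj
      have : ∫ t in Ioc (-π) π, Complex.exp (((j:ℂ) - n) * t * Complex.I)
          = ∫ t in (-π)..π, Complex.exp ((((j:ℂ) - n) * Complex.I) * t) := by
        rw [intervalIntegral.integral_of_le (by linarith [Real.pi_pos])]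
        congr 1
        funext t
        ring_nf
      rw [this, integral_exp_mul_complex hc]
      set k : ℤ := (j:ℤ) - (n:ℤ) with hk
      have hπ : (((j:ℂ) - n) * Complex.I) * ((π:ℝ):ℂ) = ((k:ℂ)) * (π * Complex.I) := by
        rw [hk]; push_cast; ring
      have hπ' : (((j:ℂ) - n) * Complex.I) * ((-π:ℝ):ℂ) = (((-k : ℤ):ℂ)) * (π * Complex.I) := by
        rw [hk]; push_cast; ring
      rw [hπ, hπ', Complex.exp_int_mul, Complex.exp_int_mul, Complex.exp_pi_mul_I]
      have hone : ((-1 : ℂ)) ^ k - ((-1:ℂ)) ^ (-k) = 0 := by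
        rw [zpow_neg, sub_eq_zero]
        rcases Int.even_or_odd k with he | ho
        · rw [he.neg_one_zpow]; norm_num
        · rw [ho.neg_one_zpow]; norm_num
      rw [hone]
      simp
  rw [hIj] at hkey
  have h2 := hasSum_ite_eq n ((2 * (π:ℝ):ℂ) * (g n * (R:ℂ) ^ n / n.factorial))
  have hfin := hkey.unique h2
  rw [← hfin]
  apply MeasureTheory.integral_congr_ae
  filter_upwards with t
  exact (htsum t).symm



lemma stirling_bound : ∃ K > (0:ℝ), ∀ᶠ n : ℕ in atTop,
    (n.factorial : ℝ) * Real.exp n ≤ K * Real.sqrt n * (n:ℝ) ^ (n:ℕ) := by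
  refine ⟨(Real.sqrt π + 1) * Real.sqrt 2, by positivity, ?_⟩
  have h := Stirling.tendsto_stirlingSeq_sqrt_pi.eventually
    (eventually_le_nhds (lt_add_one (Real.sqrt π)))
  filter_upwards [h, eventually_ge_atTop 1] with n hn hn1
  have hnp : (0:ℝ) < n := by exact_mod_cast hn1
  have hden : (0:ℝ) < Real.sqrt (2*n) * ((n:ℝ)/Real.exp 1) ^ n := by positivity
  rw [Stirling.stirlingSeq, div_le_iff₀ hden] at hn
  have he : ((n:ℝ)/Real.exp 1) ^ n * Real.exp n = (n:ℝ) ^ n := by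
    rw [div_pow, div_mul_eq_mul_div]
    rw [show Real.exp 1 ^ n = Real.exp n by rw [← Real.exp_nat_mul]; ring_nf]
    field_simp
  have h2 : Real.sqrt (2*n) = Real.sqrt 2 * Real.sqrt n := Real.sqrt_mul (by norm_num) _
  calc (n.factorial : ℝ) * Real.exp n
      ≤ (Real.sqrt π + 1) * (Real.sqrt (2*n) * ((n:ℝ)/Real.exp 1) ^ n) * Real.exp n := by
        have : (0:ℝ) < Real.exp n := Real.exp_pos _
        nlinarith
    _ = (Real.sqrt π + 1) * Real.sqrt 2 * Real.sqrt n * (n:ℝ) ^ n := by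
        rw [h2, show (Real.sqrt π + 1) * (Real.sqrt 2 * Real.sqrt n * ((n:ℝ)/Real.exp 1) ^ n)
            * Real.exp n = (Real.sqrt π + 1) * Real.sqrt 2 * Real.sqrt n *
            (((n:ℝ)/Real.exp 1) ^ n * Real.exp n) by ring, he]

lemma mem_cone {θ : ℝ} (hθ₁ : 0 < θ) (hθ₂ : θ < π/2) {w : ℂ} (hre : 0 < w.re)
    (him : |w.im| ≤ Real.sin θ * ‖w‖) : |w.arg| ≤ θ := by
  by_contra h
  push_neg at h
  have hw0 : w ≠ 0 := fun h0 => by simp [h0] at hre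
  have habsw : 0 < ‖w‖ := norm_pos_iff.mpr hw0
  have habs : |w.arg| ≤ π/2 := Complex.abs_arg_le_pi_div_two_iff.mpr hre.le
  have hsin : Real.sin θ < Real.sin |w.arg| :=
    Real.sin_lt_sin_of_lt_of_le_pi_div_two (by linarith) habs h
  have hsabs : Real.sin |w.arg| = |Real.sin w.arg| := by
    rcases abs_cases w.arg with ⟨h1, h2⟩ | ⟨h1, h2⟩
    · rw [h1]
      refine (_root_.abs_of_nonneg (Real.sin_nonneg_of_nonneg_of_le_pi h2 ?_)).symm
      have := le_abs_self w.arg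
      linarith [Real.pi_pos]
    · rw [h1, Real.sin_neg]
      refine (_root_.abs_of_nonpos (Real.sin_nonpos_of_nonpos_of_neg_pi_le h2.le ?_)).symm
      have := Complex.neg_pi_lt_arg w
      linarith
  rw [hsabs, Complex.sin_arg, abs_div] at hsin
  rw [show |‖w‖| = ‖w‖ from abs_of_pos habsw, lt_div_iff₀ habsw] at hsin
  nlinarith

lemma lipschitz_bound (F : ℂ → ℂ) (hF : Differentiable ℂ F) (θ β₁ c z₀ : ℝ)
    (hθ₁ : 0 < θ) (hθ₂ : θ < π/2) (hβ₁ : 0 < β₁) (hc : 0 < c) (hz₀ : 0 < z₀)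
    (hin : ∀ z : ℂ, z₀ ≤ ‖z‖ → |z.arg| ≤ θ →
      ‖Complex.exp (-z) * F z‖ ≤ β₁ * ‖z‖ ^ c)
    (n : ℕ) (hn2z : 2*z₀ ≤ n) (hn1 : 1 ≤ n) (z : ℂ)
    (hz : ‖z - n‖ ≤ (n:ℝ) * Real.sin θ / 4) :
    ‖Complex.exp (-z) * F z - Complex.exp (-(n:ℂ)) * F n‖ ≤
      (2*(2*β₁*(2:ℝ)^c + 1)/Real.sin θ) * ((n:ℝ)^c / n) * ‖z - n‖ := by
  set P : ℂ → ℂ := fun w => Complex.exp (-w) * F w with hP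
  set s : ℝ := Real.sin θ with hsdef
  have hs0 : 0 < s := Real.sin_pos_of_pos_of_lt_pi hθ₁ (by linarith [Real.pi_pos])
  have hs1 : s ≤ 1 := Real.sin_le_one θ
  have hnp : (0:ℝ) < n := by exact_mod_cast hn1
  set ρ : ℝ := (n:ℝ) * s / 2 with hρdef
  have hρ0 : 0 < ρ := by positivity
  set M : ℝ := 2*β₁*((2:ℝ)*n)^c + 1 with hM
  have hM0 : 0 < M := by positivity
  -- bound on P on the ball
  have hball : ∀ w ∈ Metric.ball ((n:ℂ)) ρ, ‖P w‖ ≤ β₁ * ((2:ℝ)*n)^c := by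
    intro w hw
    rw [Metric.mem_ball, dist_eq_norm] at hw
    have hw' : ‖w - n‖ < ρ := hw
    have hre : (n:ℝ) - ρ ≤ w.re := by
      have h1 : |(w - (n:ℂ)).re| ≤ ‖w - n‖ := Complex.abs_re_le_norm _
      have h2 : (w - (n:ℂ)).re = w.re - n := by simp
      rw [h2] at h1
      have := abs_le.mp h1
      linarith
    have hre2 : (n:ℝ)/2 ≤ w.re := by
      have : ρ ≤ (n:ℝ)/2 := by rw [hρdef]; nlinarith
      linarith
    have hrepos : 0 < w.re := by linarith
    have habsw_lb : (n:ℝ)/2 ≤ ‖w‖ := le_trans hre2 (Complex.re_le_norm w)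
    have habsw_ub : ‖w‖ ≤ 2*n := by
      have h3 : ‖w‖ ≤ ‖(n:ℂ)‖ + ‖w - n‖ := by
        calc ‖w‖ = ‖(n:ℂ) + (w - n)‖ := by ring_nf
          _ ≤ ‖(n:ℂ)‖ + ‖w - n‖ := norm_add_le _ _
      have h4 : ‖(n:ℂ)‖ = (n:ℝ) := by
        rw [Complex.norm_natCast]
      rw [h4] at h3
      nlinarith
    have him : |w.im| ≤ s * ‖w‖ := by
      have h1 : |(w - (n:ℂ)).im| ≤ ‖w - n‖ := Complex.abs_im_le_norm _
      have h2 : (w - (n:ℂ)).im = w.im := by simp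
      rw [h2] at h1
      nlinarith
    have harg : |w.arg| ≤ θ := mem_cone hθ₁ hθ₂ hrepos him
    have habsz₀ : z₀ ≤ ‖w‖ := by linarith
    have := hin w habsz₀ harg
    calc ‖P w‖ ≤ β₁ * ‖w‖ ^ c := this
      _ ≤ β₁ * ((2:ℝ)*n)^c := by
          gcongr
  have hmaps : Set.MapsTo P (Metric.ball ((n:ℂ)) ρ) (Metric.ball (P (n:ℂ)) M) := by
    intro w hw
    have h1 := hball w hw
    have h2 : ‖P (n:ℂ)‖ ≤ β₁ * ((2:ℝ)*n)^c :=
      hball _ (Metric.mem_ball_self hρ0)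
    rw [Metric.mem_ball, dist_eq_norm]
    calc ‖P w - P (n:ℂ)‖ ≤ ‖P w‖ + ‖P (n:ℂ)‖ := norm_sub_le _ _
      _ ≤ β₁ * ((2:ℝ)*n)^c + β₁ * ((2:ℝ)*n)^c := add_le_add h1 h2
      _ < M := by rw [hM]; nlinarith [Real.rpow_pos_of_pos (show (0:ℝ) < 2*n by positivity) c]
  have hdiff : DifferentiableOn ℂ P (Metric.ball ((n:ℂ)) ρ) := by
    apply Differentiable.differentiableOn
    exact (Complex.differentiable_exp.comp differentiable_neg).mul hF
  have hzball : z ∈ Metric.ball ((n:ℂ)) ρ := by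
    rw [Metric.mem_ball, dist_eq_norm]
    calc ‖z - (n:ℂ)‖ ≤ (n:ℝ) * s / 4 := hz
      _ < ρ := by rw [hρdef]; nlinarith
  have hschwarz := Complex.dist_le_div_mul_dist_of_mapsTo_ball hdiff
    (hmaps.mono_right Metric.ball_subset_closedBall) hzball
  rw [dist_eq_norm, dist_eq_norm] at hschwarz
  have hMle : M ≤ (2*β₁*(2:ℝ)^c + 1) * (n:ℝ)^c := by
    rw [hM]
    have h1 : ((2:ℝ)*n)^c = (2:ℝ)^c * (n:ℝ)^c :=
      Real.mul_rpow (by norm_num) (le_of_lt hnp)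
    have h2 : (1:ℝ) ≤ (n:ℝ)^c := Real.one_le_rpow (by exact_mod_cast hn1) hc.le
    rw [h1]; nlinarith [Real.rpow_pos_of_pos (show (0:ℝ) < 2 by norm_num) c]
  have hfrac : M / ρ ≤ (2*(2*β₁*(2:ℝ)^c + 1)/s) * ((n:ℝ)^c / n) := by
    rw [hρdef, div_le_iff₀ (by positivity)]
    have hnc : (0:ℝ) < (n:ℝ)^c := Real.rpow_pos_of_pos hnp c
    calc M ≤ (2*β₁*(2:ℝ)^c + 1) * (n:ℝ)^c := hMle
      _ = (2*(2*β₁*(2:ℝ)^c + 1)/s) * ((n:ℝ)^c / n) * ((n:ℝ) * s / 2) := by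
          field_simp
  calc ‖P z - P (n:ℂ)‖ ≤ M / ρ * ‖z - (n:ℂ)‖ := hschwarz
    _ ≤ (2*(2*β₁*(2:ℝ)^c + 1)/s) * ((n:ℝ)^c / n) * ‖z - n‖ := by
        apply mul_le_mul_of_nonneg_right hfrac (norm_nonneg _)

/-- The depoissonization lemma of Jacquet and Szpankowski: if the Poisson transform
`P(z) = e^{−z} ∑_j a_j z^j / j!` of a real sequence extends to an entire function `F`
(so `P(z) = e^{−z} F(z)`) which is `O(|z|^c)` inside a cone `|arg z| ≤ θ` and such that
`P(z)e^z` is `O(|z|^c e^{α|z|})` outside the cone, then `a_n = P(n) + O(n^{c−1/2} ln n)`. -/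
theorem depoissonization (a : ℕ → ℝ) (F : ℂ → ℂ)
    (hF : Differentiable ℂ F)
    (hFsum : ∀ z : ℂ, HasSum (fun j : ℕ => (a j : ℂ) * z ^ j / (j.factorial : ℂ)) (F z))
    (θ : ℝ) (hθ₁ : 0 < θ) (hθ₂ : θ < Real.pi / 2)
    (α β₁ β₂ c z₀ : ℝ) (hα₁ : 0 < α) (hα₂ : α < 1)
    (hβ₁ : 0 < β₁) (hβ₂ : 0 < β₂) (hc : 0 < c) (hz₀ : 0 < z₀)
    (hin : ∀ z : ℂ, z₀ ≤ ‖z‖ → |z.arg| ≤ θ →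
      ‖Complex.exp (-z) * F z‖ ≤ β₁ * ‖z‖ ^ c)
    (hout : ∀ z : ℂ, z₀ ≤ ‖z‖ → ¬ |z.arg| ≤ θ →
      ‖Complex.exp (-z) * F z * Complex.exp z‖ ≤
        β₂ * ‖z‖ ^ c * Real.exp (α * ‖z‖)) :
    ∃ C > (0 : ℝ), ∃ n₀ : ℕ, ∀ n ≥ n₀,
      ‖(a n : ℂ) - Complex.exp (-(n : ℂ)) * F n‖ ≤
        C * (n : ℝ) ^ (c - 1 / 2) * Real.log n := by
  classical
  have hπ := Real.pi_pos
  have hexp : ∀ z : ℂ, HasSum (fun j : ℕ => (1:ℂ) * z ^ j / (j.factorial : ℂ)) (Complex.exp z) := by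
    intro z
    simpa [Complex.exp_eq_exp_ℂ] using NormedSpace.expSeries_div_hasSum_exp z
  obtain ⟨Ks, hKs, hstir⟩ := stirling_bound
  set s : ℝ := Real.sin θ with hsdef
  have hs0 : 0 < s := Real.sin_pos_of_pos_of_lt_pi hθ₁ (by linarith)
  have hs1 : s ≤ 1 := Real.sin_le_one θ
  set κ : ℝ := 2 / π^2 with hκdef
  have hκ0 : 0 < κ := by positivity
  set K : ℝ := 2*(2*β₁*(2:ℝ)^c + 1)/s with hKdef
  have hK0 : 0 < K := by positivity
  set C : ℝ := 2*β₁*Ks + 1 + 2*K*Ks*(c+1)/(π*κ) with hCdef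
  have hC0 : 0 < C := by positivity
  refine ⟨C, hC0, ?_⟩
  set δf : ℕ → ℝ := fun n => Real.sqrt ((c+1) * Real.log n / (κ * n)) with hδf
  have hδ_tendsto : Tendsto δf atTop (𝓝 0) := by
    have h1 : Tendsto (fun x : ℝ => Real.log x / x) atTop (𝓝 0) :=
      Real.isLittleO_log_id_atTop.tendsto_div_nhds_zero
    have h2 : Tendsto (fun n : ℕ => Real.log n / n) atTop (𝓝 0) :=
      h1.comp tendsto_natCast_atTop_atTop
    have h3 : Tendsto (fun n : ℕ => (c+1)/κ * (Real.log n / n)) atTop (𝓝 0) := by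
      simpa using h2.const_mul ((c+1)/κ)
    have h4 : Tendsto (fun n : ℕ => (c+1) * Real.log n / (κ * n)) atTop (𝓝 0) := by
      refine h3.congr (fun n => ?_)
      field_simp
    have := (Real.continuous_sqrt.tendsto 0).comp h4
    rw [hδf]
    simpa [Real.sqrt_zero, Function.comp_def] using this
  have hev3 : ∀ᶠ n : ℕ in atTop, δf n ≤ min (s/8) 1 :=
    hδ_tendsto.eventually (eventually_le_nhds (by positivity))
  have hev4 : ∀ᶠ n : ℕ in atTop, Ks*β₂*(n:ℝ)*Real.exp (-((1-α)*(n:ℝ))) ≤ 1 := by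
    have h1 : Tendsto (fun x : ℝ => x * Real.exp (-x)) atTop (𝓝 0) := by
      simpa using Real.tendsto_pow_mul_exp_neg_atTop_nhds_zero 1
    have h2 : Tendsto (fun n : ℕ => (1-α)*(n:ℝ)) atTop atTop :=
      (tendsto_natCast_atTop_atTop).const_mul_atTop (by linarith)
    have h3 : Tendsto (fun n : ℕ => ((1-α)*(n:ℝ)) * Real.exp (-((1-α)*(n:ℝ)))) atTop (𝓝 0) :=
      h1.comp h2
    have h4 : Tendsto (fun n : ℕ => (Ks*β₂/(1-α)) * (((1-α)*(n:ℝ)) * Real.exp (-((1-α)*(n:ℝ))))) atTop (𝓝 0) := by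
      simpa using h3.const_mul (Ks*β₂/(1-α))
    have h5 : Tendsto (fun n : ℕ => Ks*β₂*(n:ℝ)*Real.exp (-((1-α)*(n:ℝ)))) atTop (𝓝 0) := by
      refine h4.congr (fun n => ?_)
      have h1α : (1-α) ≠ 0 := by linarith
      field_simp
    exact h5.eventually (eventually_le_nhds (by norm_num))
  have hev2 : ∀ᶠ n : ℕ in atTop, 2*z₀ ≤ (n:ℝ) :=
    (tendsto_natCast_atTop_atTop (R := ℝ)).eventually_ge_atTop (2*z₀)
  have hev1 : ∀ᶠ n : ℕ in atTop, 3 ≤ n := eventually_ge_atTop 3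
  obtain ⟨n₀, hn₀⟩ := eventually_atTop.mp
    (hev1.and (hev2.and (hev3.and (hev4.and hstir))))
  refine ⟨n₀, fun n hn => ?_⟩
  obtain ⟨hn3, hn2z, hδmin, hexpsmall, hstirn⟩ := hn₀ n hn
  have hn1 : 1 ≤ n := by omega
  have hnp : (0:ℝ) < (n:ℝ) := by exact_mod_cast Nat.lt_of_lt_of_le (by norm_num) hn3
  have hN1 : (1:ℝ) ≤ (n:ℝ) := by exact_mod_cast hn1
  have hN3 : (3:ℝ) ≤ (n:ℝ) := by exact_mod_cast hn3
  set δ : ℝ := δf n with hδdef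
  have hδ0 : 0 ≤ δ := Real.sqrt_nonneg _
  have hδs8 : δ ≤ s/8 := le_trans hδmin (min_le_left _ _)
  have hδ1 : δ ≤ 1 := le_trans hδmin (min_le_right _ _)
  have hπ3 : (3:ℝ) < π := by
    have := Real.pi_gt_three
    linarith
  have hδπ : δ ≤ π := by linarith
  have hlog0 : 0 ≤ Real.log n := Real.log_nonneg hN1
  have hlog1 : 1 ≤ Real.log n := by
    rw [Real.le_log_iff_exp_le hnp]
    have h9 := Real.exp_one_lt_d9
    linarith
  have hδsq : δ^2 = (c+1)*Real.log n/(κ*(n:ℝ)) := by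
    rw [hδdef, hδf, Real.sq_sqrt]
    apply div_nonneg (by positivity) (by positivity)
  have hz₀n : z₀ ≤ (n:ℝ) := by linarith
  -- the contour function and integrand
  set w : ℝ → ℂ := fun t => (n:ℂ) * Complex.exp (t * Complex.I) with hwdef
  set g : ℝ → ℂ := fun t =>
    (F (w t) - Complex.exp (-(n:ℂ)) * F n * Complex.exp (w t)) *
      Complex.exp (-(n:ℂ) * t * Complex.I) with hgdef
  have hFc : Continuous F := hF.continuous
  have hwc : Continuous w := by fun_prop
  have hgc : Continuous g := by fun_prop
  set r : ℝ := 2*π*(n:ℝ)^(n:ℕ)/(n.factorial:ℝ) with hrdef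
  have hr0 : 0 < r := by positivity
  set X : ℂ := (a n : ℂ) - Complex.exp (-(n:ℂ)) * F n with hX
  have hexp_cancel : ∀ v : ℂ, Complex.exp (-v) * Complex.exp v = 1 := fun v => by
    rw [← Complex.exp_add]; simp
  have hId : ∫ t in Ioc (-π) π, g t = (r:ℂ) * X := by
    have h1 := coeff_integral (fun j => (a j : ℂ)) F hFsum (n:ℝ) hnp n
    have h2 := coeff_integral (fun _ => (1:ℂ)) Complex.exp hexp (n:ℝ) hnp n
    simp only [Complex.ofReal_natCast] at h1 h2
    have hint1 : IntegrableOn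
        (fun t : ℝ => F (w t) * Complex.exp (-(n:ℂ)*t*Complex.I)) (Ioc (-π) π) volume :=
      (by fun_prop : Continuous (fun t : ℝ => F (w t) * Complex.exp (-(n:ℂ)*t*Complex.I))).integrableOn_Ioc
    have hint2 : IntegrableOn
        (fun t : ℝ => Complex.exp (-(n:ℂ)) * F n *
          (Complex.exp (w t) * Complex.exp (-(n:ℂ)*t*Complex.I))) (Ioc (-π) π) volume :=
      (by fun_prop : Continuous (fun t : ℝ => Complex.exp (-(n:ℂ)) * F n *
          (Complex.exp (w t) * Complex.exp (-(n:ℂ)*t*Complex.I)))).integrableOn_Ioc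
    have hg' : g = fun t => F (w t) * Complex.exp (-(n:ℂ)*t*Complex.I) -
        Complex.exp (-(n:ℂ)) * F n * (Complex.exp (w t) * Complex.exp (-(n:ℂ)*t*Complex.I)) := by
      funext t
      rw [hgdef]
      ring
    rw [hg', MeasureTheory.integral_sub hint1 hint2, MeasureTheory.integral_const_mul, h1, h2]
    rw [hrdef, hX]
    have hfac : ((n.factorial:ℝ):ℂ) ≠ 0 := by
      exact_mod_cast Nat.cast_ne_zero.mpr (Nat.factorial_ne_zero n)
    push_cast
    field_simp
  have hXb : ‖X‖ ≤ (1/r) * ∫ t in Ioc (-π) π, ‖g t‖ := by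
    have h := MeasureTheory.norm_integral_le_integral_norm (μ := volume.restrict (Ioc (-π) π)) g
    rw [hId, norm_mul, Complex.norm_real, Real.norm_eq_abs, abs_of_pos hr0] at h
    have heq : ∫ t in Ioc (-π) π, ‖g t‖ = ∫ t in Ioc (-π) π, ‖g t‖ := rfl
    rw [heq]
    calc ‖X‖ = (r * ‖X‖)/r := by field_simp
      _ ≤ (∫ t in Ioc (-π) π, ‖g t‖)/r := by
          gcongr
      _ = (1/r) * ∫ t in Ioc (-π) π, ‖g t‖ := by ring
  -- basic pointwise facts
  have habs_eti : ∀ t : ℝ, ‖Complex.exp ((t:ℂ) * Complex.I)‖ = 1 := fun t => by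
    rw [Complex.norm_exp]
    simp
  have habs_w : ∀ t : ℝ, ‖w t‖ = (n:ℝ) := fun t => by
    rw [hwdef]
    simp only [norm_mul, Complex.norm_natCast, habs_eti, mul_one]
  have hre_w : ∀ t : ℝ, (w t).re = (n:ℝ) * Real.cos t := fun t => by
    rw [hwdef]
    simp only []
    rw [Complex.exp_mul_I, ← Complex.ofReal_cos, ← Complex.ofReal_sin]
    simp only [Complex.mul_re, Complex.add_re, Complex.natCast_re, Complex.ofReal_re,
      Complex.natCast_im, Complex.add_im, Complex.mul_im, Complex.ofReal_im,
      Complex.I_re, Complex.I_im]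
    ring
  have habs_e : ∀ t : ℝ, ‖Complex.exp (-(n:ℂ) * t * Complex.I)‖ = 1 := fun t => by
    rw [Complex.norm_exp]
    simp
  have hgnorm : ∀ t : ℝ, ‖g t‖ =
      ‖F (w t) - Complex.exp (-(n:ℂ)) * F n * Complex.exp (w t)‖ := fun t => by
    rw [hgdef]
    simp only [norm_mul, habs_e, mul_one]
  have hPn : ‖Complex.exp (-(n:ℂ)) * F n‖ ≤ β₁ * (n:ℝ)^c := by
    have h1 : ‖(n:ℂ)‖ = (n:ℝ) := Complex.norm_natCast n
    have h2 : |Complex.arg ((n:ℂ))| ≤ θ := by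
      rw [Complex.natCast_arg]
      simpa using hθ₁.le
    have := hin ((n:ℂ)) (by rw [h1]; linarith) h2
    rwa [h1] at this
  have hFrw : ∀ t : ℝ, F (w t) =
      Complex.exp (-(w t)) * F (w t) * Complex.exp (w t) := fun t => by
    rw [mul_comm (Complex.exp (-(w t))) (F (w t)), mul_assoc, hexp_cancel, mul_one]
  have habs_ew : ∀ t : ℝ, ‖Complex.exp (w t)‖ = Real.exp ((n:ℝ) * Real.cos t) := fun t => by
    rw [Complex.norm_exp, hre_w]
  have hgen : ∀ t : ℝ, ‖g t‖ ≤
      2*β₁*(n:ℝ)^c*Real.exp ((n:ℝ)*Real.cos t) + β₂*(n:ℝ)^c*Real.exp (α*(n:ℝ)) := by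
    intro t
    rw [hgnorm t]
    have hz₀w : z₀ ≤ ‖w t‖ := by rw [habs_w]; linarith
    have hterm2 : ‖Complex.exp (-(n:ℂ)) * F n * Complex.exp (w t)‖ ≤
        β₁*(n:ℝ)^c*Real.exp ((n:ℝ)*Real.cos t) := by
      rw [norm_mul, habs_ew]
      exact mul_le_mul_of_nonneg_right hPn (Real.exp_pos _).le
    have hterm1 : ‖F (w t)‖ ≤
        β₁*(n:ℝ)^c*Real.exp ((n:ℝ)*Real.cos t) + β₂*(n:ℝ)^c*Real.exp (α*(n:ℝ)) := by
      by_cases harg : |(w t).arg| ≤ θ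
      · have h1 := hin (w t) hz₀w harg
        rw [habs_w] at h1
        have : ‖F (w t)‖ ≤ β₁*(n:ℝ)^c*Real.exp ((n:ℝ)*Real.cos t) := by
          rw [hFrw t, norm_mul, habs_ew]
          exact mul_le_mul_of_nonneg_right h1 (Real.exp_pos _).le
        have hpos : 0 ≤ β₂*(n:ℝ)^c*Real.exp (α*(n:ℝ)) := by positivity
        linarith
      · have h1 := hout (w t) hz₀w harg
        rw [habs_w] at h1
        have : ‖F (w t)‖ ≤ β₂*(n:ℝ)^c*Real.exp (α*(n:ℝ)) := by
          rw [hFrw t]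
          exact h1
        have hpos : 0 ≤ β₁*(n:ℝ)^c*Real.exp ((n:ℝ)*Real.cos t) := by positivity
        linarith
    calc ‖F (w t) - Complex.exp (-(n:ℂ)) * F n * Complex.exp (w t)‖
        ≤ ‖F (w t)‖ + ‖Complex.exp (-(n:ℂ)) * F n * Complex.exp (w t)‖ := by
          simpa using norm_sub_le (F (w t))
            (Complex.exp (-(n:ℂ)) * F n * Complex.exp (w t))
      _ ≤ _ := by linarith
  set Bout : ℝ := 2*β₁*(n:ℝ)^c*Real.exp ((n:ℝ)*(1-κ*δ^2)) + β₂*(n:ℝ)^c*Real.exp (α*(n:ℝ))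
    with hBoutdef
  have hBout0 : 0 ≤ Bout := by positivity
  set Bin : ℝ := 2*K*(n:ℝ)^c*δ*Real.exp (n:ℝ) with hBindef
  have hBin0 : 0 ≤ Bin := by positivity
  have houter : ∀ t : ℝ, δ ≤ |t| → |t| ≤ π → ‖g t‖ ≤ Bout := by
    intro t h1 h2
    have hcos : Real.cos t ≤ 1 - κ*δ^2 := by
      have h3 := Real.cos_le_one_sub_mul_cos_sq h2
      have h4 : δ^2 ≤ t^2 := by
        rw [← _root_.sq_abs t]
        exact pow_le_pow_left₀ hδ0 h1 2
      have h5 : κ*δ^2 ≤ κ*t^2 := mul_le_mul_of_nonneg_left h4 hκ0.le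
      rw [hκdef] at h5 ⊢
      linarith
    calc ‖g t‖ ≤
        2*β₁*(n:ℝ)^c*Real.exp ((n:ℝ)*Real.cos t) + β₂*(n:ℝ)^c*Real.exp (α*(n:ℝ)) := hgen t
      _ ≤ Bout := by
          rw [hBoutdef]
          gcongr
  have hinner : ∀ t : ℝ, |t| ≤ δ → ‖g t‖ ≤ Bin := by
    intro t ht
    have habs_wn : ‖w t - n‖ ≤ 2*(n:ℝ)*δ := by
      have h1 : w t - (n:ℂ) = (n:ℂ) * (Complex.exp ((t:ℂ) * Complex.I) - 1) := by
        rw [hwdef]; ring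
      rw [h1, norm_mul, Complex.norm_natCast]
      have h2 : ‖(t:ℂ) * Complex.I‖ ≤ 1 := by
        simp only [norm_mul, Complex.norm_I, mul_one, Complex.norm_real, Real.norm_eq_abs]
        linarith
      have h3 := Complex.norm_exp_sub_one_le h2
      have h4 : ‖(t:ℂ) * Complex.I‖ = |t| := by
        simp
      rw [h4] at h3
      calc (n:ℝ) * ‖Complex.exp ((t:ℂ) * Complex.I) - 1‖ ≤ (n:ℝ) * (2*|t|) := by
            exact mul_le_mul_of_nonneg_left h3 hnp.le
        _ ≤ 2*(n:ℝ)*δ := by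
            have := mul_le_mul_of_nonneg_left ht (by positivity : (0:ℝ) ≤ 2*(n:ℝ))
            linarith
    have hballcond : ‖w t - n‖ ≤ (n:ℝ) * Real.sin θ / 4 := by
      have : 2*(n:ℝ)*δ ≤ (n:ℝ) * s / 4 := by
        have := mul_le_mul_of_nonneg_left hδs8 (by positivity : (0:ℝ) ≤ 2*(n:ℝ))
        linarith
      rw [← hsdef]
      linarith
    have hlip := lipschitz_bound F hF θ β₁ c z₀ hθ₁ hθ₂ hβ₁ hc hz₀ hin n hn2z hn1
      (w t) hballcond
    rw [← hsdef, ← hKdef] at hlip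
    have hsplit2 : F (w t) - Complex.exp (-(n:ℂ)) * F n * Complex.exp (w t) =
        (Complex.exp (-(w t)) * F (w t) - Complex.exp (-(n:ℂ)) * F n) * Complex.exp (w t) := by
      rw [sub_mul, ← hFrw t]
    rw [hgnorm t, hsplit2, norm_mul, habs_ew]
    have hlip2 : ‖Complex.exp (-(w t)) * F (w t) - Complex.exp (-(n:ℂ)) * F n‖ ≤
        2*K*(n:ℝ)^c*δ := by
      calc ‖Complex.exp (-(w t)) * F (w t) - Complex.exp (-(n:ℂ)) * F n‖
          ≤ K * ((n:ℝ)^c / n) * ‖w t - n‖ := hlip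
        _ ≤ K * ((n:ℝ)^c / n) * (2*(n:ℝ)*δ) := by
            apply mul_le_mul_of_nonneg_left habs_wn
            positivity
        _ = 2*K*(n:ℝ)^c*δ := by field_simp
    have hcos1 : Real.exp ((n:ℝ)*Real.cos t) ≤ Real.exp (n:ℝ) := by
      apply Real.exp_le_exp.mpr
      calc (n:ℝ)*Real.cos t ≤ (n:ℝ)*1 := mul_le_mul_of_nonneg_left (Real.cos_le_one t) hnp.le
        _ = (n:ℝ) := mul_one _
    calc ‖Complex.exp (-(w t)) * F (w t) - Complex.exp (-(n:ℂ)) * F n‖ *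
          Real.exp ((n:ℝ)*Real.cos t)
        ≤ (2*K*(n:ℝ)^c*δ) * Real.exp (n:ℝ) := by
          apply mul_le_mul hlip2 hcos1 (Real.exp_pos _).le (by positivity)
      _ = Bin := by rw [hBindef]
  -- split the integral
  have hgInt : ∀ u v : ℝ, IntervalIntegrable (fun t => ‖g t‖) volume u v :=
    fun u v => (continuous_norm.comp hgc).intervalIntegrable u v
  have hIsplit : ∫ t in Ioc (-π) π, ‖g t‖ ≤ 2*π*Bout + 2*δ*Bin := by
    rw [← intervalIntegral.integral_of_le (by linarith : -π ≤ π)]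
    have e1 : (∫ t in (-π)..(-δ), ‖g t‖) + (∫ t in (-δ)..δ, ‖g t‖) +
        (∫ t in δ..π, ‖g t‖) = ∫ t in (-π)..π, ‖g t‖ := by
      rw [intervalIntegral.integral_add_adjacent_intervals (hgInt (-π) (-δ)) (hgInt (-δ) δ),
        intervalIntegral.integral_add_adjacent_intervals (hgInt (-π) δ) (hgInt δ π)]
    rw [← e1]
    have hI1 : ∫ t in (-π)..(-δ), ‖g t‖ ≤ (π - δ) * Bout := by
      have hb : ∀ t ∈ Icc (-π) (-δ), ‖g t‖ ≤ Bout := by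
        rintro t ⟨ht1, ht2⟩
        refine houter t ?_ ?_
        · rw [abs_of_nonpos (by linarith)]; linarith
        · rw [abs_of_nonpos (by linarith)]; linarith
      calc ∫ t in (-π)..(-δ), ‖g t‖ ≤ ∫ _t in (-π)..(-δ), Bout :=
            intervalIntegral.integral_mono_on (by linarith) (hgInt _ _)
              intervalIntegrable_const hb
        _ = ((-δ) - (-π)) • Bout := intervalIntegral.integral_const _
        _ = (π - δ) * Bout := by rw [smul_eq_mul]; ring
    have hI3 : ∫ t in δ..π, ‖g t‖ ≤ (π - δ) * Bout := by
      have hb : ∀ t ∈ Icc δ π, ‖g t‖ ≤ Bout := by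
        rintro t ⟨ht1, ht2⟩
        refine houter t ?_ ?_
        · rw [_root_.abs_of_nonneg (by linarith : (0:ℝ) ≤ t)]; linarith
        · rw [_root_.abs_of_nonneg (by linarith : (0:ℝ) ≤ t)]; linarith
      calc ∫ t in δ..π, ‖g t‖ ≤ ∫ _t in δ..π, Bout :=
            intervalIntegral.integral_mono_on (by linarith) (hgInt _ _)
              intervalIntegrable_const hb
        _ = (π - δ) • Bout := intervalIntegral.integral_const _
        _ = (π - δ) * Bout := by rw [smul_eq_mul]
    have hI2 : ∫ t in (-δ)..δ, ‖g t‖ ≤ 2*δ*Bin := by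
      have hb : ∀ t ∈ Icc (-δ) δ, ‖g t‖ ≤ Bin := by
        rintro t ⟨ht1, ht2⟩
        exact hinner t (abs_le.mpr ⟨ht1, ht2⟩)
      calc ∫ t in (-δ)..δ, ‖g t‖ ≤ ∫ _t in (-δ)..δ, Bin :=
            intervalIntegral.integral_mono_on (by linarith) (hgInt _ _)
              intervalIntegrable_const hb
        _ = (δ - (-δ)) • Bin := intervalIntegral.integral_const _
        _ = 2*δ*Bin := by rw [smul_eq_mul]; ring
    have hπδB : (π - δ) * Bout ≤ π * Bout :=
      mul_le_mul_of_nonneg_right (by linarith) hBout0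
    linarith
  have hstep1 : ‖X‖ ≤ (1/r) * (2*π*Bout + 2*δ*Bin) :=
    le_trans hXb (mul_le_mul_of_nonneg_left hIsplit (by positivity))
  have hfac0 : (n.factorial:ℝ) ≠ 0 := by
    exact_mod_cast Nat.factorial_ne_zero n
  have hnn0 : ((n:ℝ)^(n:ℕ)) ≠ 0 := by positivity
  have hr1 : (1/r) * (2*π*Bout + 2*δ*Bin) =
      ((n.factorial:ℝ)/(n:ℝ)^(n:ℕ)) * (Bout + δ*Bin/π) := by
    rw [hrdef]
    field_simp
  have hstirn' : (n.factorial:ℝ)/(n:ℝ)^(n:ℕ) ≤ Ks * Real.sqrt n * Real.exp (-(n:ℝ)) := by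
    rw [div_le_iff₀ (by positivity)]
    calc (n.factorial:ℝ) = (n.factorial:ℝ) * Real.exp (n:ℝ) * Real.exp (-(n:ℝ)) := by
          rw [mul_assoc, ← Real.exp_add]
          simp
      _ ≤ (Ks * Real.sqrt n * (n:ℝ)^(n:ℕ)) * Real.exp (-(n:ℝ)) :=
          mul_le_mul_of_nonneg_right hstirn (Real.exp_pos _).le
      _ = Ks * Real.sqrt n * Real.exp (-(n:ℝ)) * (n:ℝ)^(n:ℕ) := by ring
  have hBpos : 0 ≤ Bout + δ*Bin/π := by positivity
  -- rpow arithmetic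
  have hexp_k : Real.exp (-(κ*(n:ℝ)*δ^2)) = (n:ℝ)^(-(c+1)) := by
    have h1 : κ*(n:ℝ)*δ^2 = (c+1)*Real.log n := by
      rw [hδsq]
      field_simp
    rw [h1, Real.rpow_def_of_pos hnp]
    congr 1
    ring
  have hr12 : Real.sqrt n * (n:ℝ)^c = (n:ℝ)^(c+1/2) := by
    rw [Real.sqrt_eq_rpow, ← Real.rpow_add hnp]
    congr 1
    ring
  have hrsplit1 : (n:ℝ)^(c+1/2) * (n:ℝ)^(-(c+1)) = (n:ℝ)^(-(1/2:ℝ)) := by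
    rw [← Real.rpow_add hnp]
    congr 1
    ring
  have hrsplit2 : (n:ℝ)^(c+1/2) = (n:ℝ) * (n:ℝ)^(c-1/2) := by
    have h1 := Real.rpow_add hnp 1 (c-1/2)
    rw [Real.rpow_one] at h1
    rw [show c+1/2 = 1+(c-1/2) by ring, h1]
  have hrneg : (n:ℝ)^(-(1/2:ℝ)) ≤ (n:ℝ)^(c-1/2) :=
    Real.rpow_le_rpow_of_exponent_le hN1 (by linarith)
  have hrpos : 0 ≤ (n:ℝ)^(c-1/2) := (Real.rpow_pos_of_pos hnp _).le
  have hT1 : Ks * Real.sqrt n * Real.exp (-(n:ℝ)) * (2*β₁*(n:ℝ)^c*Real.exp ((n:ℝ)*(1-κ*δ^2)))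
      ≤ 2*β₁*Ks * ((n:ℝ)^(c-1/2) * Real.log n) := by
    have he : Real.exp (-(n:ℝ)) * Real.exp ((n:ℝ)*(1-κ*δ^2)) = Real.exp (-(κ*(n:ℝ)*δ^2)) := by
      rw [← Real.exp_add]
      congr 1
      ring
    calc Ks * Real.sqrt n * Real.exp (-(n:ℝ)) * (2*β₁*(n:ℝ)^c*Real.exp ((n:ℝ)*(1-κ*δ^2)))
        = 2*β₁*Ks * ((Real.sqrt n * (n:ℝ)^c) * (Real.exp (-(n:ℝ)) * Real.exp ((n:ℝ)*(1-κ*δ^2)))) := by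
          ring
      _ = 2*β₁*Ks * ((n:ℝ)^(c+1/2) * (n:ℝ)^(-(c+1))) := by rw [he, hexp_k, hr12]
      _ = 2*β₁*Ks * (n:ℝ)^(-(1/2:ℝ)) := by rw [hrsplit1]
      _ ≤ 2*β₁*Ks * ((n:ℝ)^(c-1/2) * Real.log n) := by
          have h2 : (n:ℝ)^(-(1/2:ℝ)) ≤ (n:ℝ)^(c-1/2) * Real.log n := by
            calc (n:ℝ)^(-(1/2:ℝ)) ≤ (n:ℝ)^(c-1/2) := hrneg
              _ = (n:ℝ)^(c-1/2) * 1 := (mul_one _).symm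
              _ ≤ (n:ℝ)^(c-1/2) * Real.log n := mul_le_mul_of_nonneg_left hlog1 hrpos
          exact mul_le_mul_of_nonneg_left h2 (by positivity)
  have hT2 : Ks * Real.sqrt n * Real.exp (-(n:ℝ)) * (β₂*(n:ℝ)^c*Real.exp (α*(n:ℝ)))
      ≤ 1 * ((n:ℝ)^(c-1/2) * Real.log n) := by
    have he : Real.exp (-(n:ℝ)) * Real.exp (α*(n:ℝ)) = Real.exp (-((1-α)*(n:ℝ))) := by
      rw [← Real.exp_add]
      congr 1
      ring
    calc Ks * Real.sqrt n * Real.exp (-(n:ℝ)) * (β₂*(n:ℝ)^c*Real.exp (α*(n:ℝ)))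
        = Ks*β₂*(Real.sqrt n*(n:ℝ)^c) * (Real.exp (-(n:ℝ)) * Real.exp (α*(n:ℝ))) := by ring
      _ = Ks*β₂*((n:ℝ)*(n:ℝ)^(c-1/2)) * Real.exp (-((1-α)*(n:ℝ))) := by
          rw [he, hr12, hrsplit2]
      _ = (Ks*β₂*(n:ℝ)*Real.exp (-((1-α)*(n:ℝ)))) * (n:ℝ)^(c-1/2) := by ring
      _ ≤ 1 * (n:ℝ)^(c-1/2) := mul_le_mul_of_nonneg_right hexpsmall hrpos
      _ = (n:ℝ)^(c-1/2) * 1 := by ring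
      _ ≤ (n:ℝ)^(c-1/2) * Real.log n := mul_le_mul_of_nonneg_left hlog1 hrpos
      _ = 1 * ((n:ℝ)^(c-1/2) * Real.log n) := by ring
  have hT3 : Ks * Real.sqrt n * Real.exp (-(n:ℝ)) * (δ*Bin/π)
      = 2*K*Ks*(c+1)/(π*κ) * ((n:ℝ)^(c-1/2) * Real.log n) := by
    rw [hBindef]
    have hee : Real.exp (-(n:ℝ)) * Real.exp (n:ℝ) = 1 := by
      rw [← Real.exp_add]
      simp
    calc Ks * Real.sqrt n * Real.exp (-(n:ℝ)) * (δ*(2*K*(n:ℝ)^c*δ*Real.exp (n:ℝ))/π)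
        = (2*K*Ks/π) * (Real.sqrt n*(n:ℝ)^c) * (δ^2) * (Real.exp (-(n:ℝ))*Real.exp (n:ℝ)) := by
          ring
      _ = (2*K*Ks/π) * ((n:ℝ)*(n:ℝ)^(c-1/2)) * ((c+1)*Real.log n/(κ*(n:ℝ))) * 1 := by
          rw [hee, hδsq, hr12, hrsplit2]
      _ = 2*K*Ks*(c+1)/(π*κ) * ((n:ℝ)^(c-1/2) * Real.log n) := by
          field_simp
  calc ‖X‖ ≤ (1/r) * (2*π*Bout + 2*δ*Bin) := hstep1
    _ = ((n.factorial:ℝ)/(n:ℝ)^(n:ℕ)) * (Bout + δ*Bin/π) := hr1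
    _ ≤ (Ks * Real.sqrt n * Real.exp (-(n:ℝ))) * (Bout + δ*Bin/π) :=
        mul_le_mul_of_nonneg_right hstirn' hBpos
    _ = Ks * Real.sqrt n * Real.exp (-(n:ℝ)) * (2*β₁*(n:ℝ)^c*Real.exp ((n:ℝ)*(1-κ*δ^2)))
        + Ks * Real.sqrt n * Real.exp (-(n:ℝ)) * (β₂*(n:ℝ)^c*Real.exp (α*(n:ℝ)))
        + Ks * Real.sqrt n * Real.exp (-(n:ℝ)) * (δ*Bin/π) := by
          rw [hBoutdef]
          ring
    _ ≤ 2*β₁*Ks * ((n:ℝ)^(c-1/2) * Real.log n) + 1 * ((n:ℝ)^(c-1/2) * Real.log n)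
        + 2*K*Ks*(c+1)/(π*κ) * ((n:ℝ)^(c-1/2) * Real.log n) :=
          add_le_add (add_le_add hT1 hT2) (le_of_eq hT3)
    _ = C * (n:ℝ)^(c-1/2) * Real.log n := by
          rw [hCdef]
          ring
end
end

section
/- In the unbiased Bernoulli trie model, let Ψ(t,z) = ∑_{j=1}^∞ j·E[e^{tδ_j}]·z^j/j!. Then for every real t with |t| < ln 2 and every real z, Ψ(t,z) = 2e^t·e^{z/2}·Ψ(t, z/2) + z(1 − e^t), all series being absolutely convergent. -/
open MeasureTheory ProbabilityTheory Filter
open scoped ENNReal NNReal Topology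

noncomputable section

/-- The length of the longest common prefix of two infinite binary strings. -/
def lcp (x y : ℕ → Bool) : ℕ := sSup {m : ℕ | ∀ k < m, x k = y k}

/-- The depth of key `i` in the trie built on the keys `X 0, …, X (n-1)`. -/
def trieDepth (X : ℕ → ℕ → Bool) (n i : ℕ) : ℕ :=
  1 + ((Finset.range n).erase i).sup fun j => lcp (X i) (X j)

/-- The distance between the (distinct) keys `i` and `j` in the trie on `n` keys. -/
def trieDist (X : ℕ → ℕ → Bool) (n i j : ℕ) : ℕ :=
  trieDepth X n i + trieDepth X n j - 2 * lcp (X i) (X j)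

/-- The unbiased Bernoulli trie model: the keys `X 0, X 1, …` are i.i.d. random infinite
binary strings whose bits are i.i.d. uniform on `{0,1}`. -/
structure TrieModel {Ω : Type*} [MeasurableSpace Ω] (P : Measure Ω)
    (X : ℕ → Ω → ℕ → Bool) : Prop where
  prob : IsProbabilityMeasure P
  measBit : ∀ i k, Measurable fun ω => X i ω k
  indepBits : iIndepFun (β := fun _ : ℕ × ℕ => Bool)
      (fun p ω => X p.1 ω p.2) P
  fairBits : ∀ i k, P {ω | X i ω k = true} = 1 / 2

/-- `δ n` is distributed as the depth `d_I(n)` of a uniformly random key `I` among the `n`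
keys, chosen independently of the keys (with `δ 1 = 0` for a single key). -/
def IsTrieDepthRV {Ω : Type*} [MeasurableSpace Ω] (P : Measure Ω)
    (X : ℕ → Ω → ℕ → Bool) (δ : ℕ → Ω → ℕ) : Prop :=
  (∀ n, Measurable (δ n)) ∧
  P {ω | δ 1 ω = 0} = 1 ∧
  ∀ n, 2 ≤ n → ∀ m : ℕ,
    P {ω | δ n ω = m} =
      (n : ℝ≥0∞)⁻¹ *
        ∑ i ∈ Finset.range n, P {ω | trieDepth (fun k => X k ω) n i = m}


section TrieAux

variable {Ω : Type*} [MeasurableSpace Ω] {P : Measure Ω} {X : ℕ → Ω → ℕ → Bool}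

lemma trie_bit_prob (hX : TrieModel P X) (i k : ℕ) (b : Bool) :
    P {ω | X i ω k = b} = 2⁻¹ := by
  have := hX.prob
  cases b
  · have hc : {ω | X i ω k = false} = {ω | X i ω k = true}ᶜ := by
      ext ω; simp [Set.mem_compl_iff]
    have hm : MeasurableSet {ω | X i ω k = true} := hX.measBit i k (measurableSet_singleton true)
    rw [hc, measure_compl hm (measure_ne_top _ _), hX.fairBits i k]
    simp [ENNReal.one_sub_inv_two]
  · rw [hX.fairBits i k]; exact one_div _

lemma trie_atom (hX : TrieModel P X) (s : Finset (ℕ × ℕ)) (v : ℕ × ℕ → Bool) :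
    P (⋂ p ∈ s, {ω | X p.1 ω p.2 = v p}) = 2⁻¹ ^ s.card := by
  rw [hX.indepBits.meas_biInter (S := s) (s := fun p => {ω | X p.1 ω p.2 = v p})
    (fun p _ => ⟨{v p}, trivial, rfl⟩)]
  rw [Finset.prod_congr rfl fun p _ => trie_bit_prob hX p.1 p.2 (v p), Finset.prod_const]

lemma trie_bit_meas (hX : TrieModel P X) (i k : ℕ) (b : Bool) :
    MeasurableSet {ω | X i ω k = b} := hX.measBit i k (measurableSet_singleton b)

lemma trie_atom' (hX : TrieModel P X) {n m : ℕ} (κ : Fin n → ℕ) (hκ : Function.Injective κ)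
    (v : (Fin n × Fin m) → Bool) :
    P {ω | ∀ p : Fin n × Fin m, X (κ p.1) ω (p.2 : ℕ) = v p} = 2⁻¹ ^ (n * m) := by
  classical
  set e : Fin n × Fin m → ℕ × ℕ := fun p => (κ p.1, (p.2 : ℕ)) with he_def
  have he : Function.Injective e := by
    intro a b h
    have h1 : κ a.1 = κ b.1 := congrArg Prod.fst h
    have h2 : (a.2 : ℕ) = (b.2 : ℕ) := congrArg Prod.snd h
    exact Prod.ext (hκ h1) (Fin.val_injective h2)
  set w : ℕ × ℕ → Bool := fun q => if h : ∃ p, e p = q then v h.choose else false with hw_def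
  have hw : ∀ p, w (e p) = v p := by
    intro p
    have h : ∃ p', e p' = e p := ⟨p, rfl⟩
    simp only [hw_def, dif_pos h]
    exact congrArg v (he h.choose_spec)
  have hset : {ω | ∀ p : Fin n × Fin m, X (κ p.1) ω (p.2 : ℕ) = v p} =
      ⋂ q ∈ Finset.univ.image e, {ω | X q.1 ω q.2 = w q} := by
    ext ω
    simp only [Set.mem_setOf_eq, Set.mem_iInter, Finset.mem_image, Finset.mem_univ, true_and]
    constructor
    · rintro h q ⟨p, rfl⟩
      rw [hw]; exact h p
    · intro h p
      rw [← hw p]; exact h (e p) ⟨p, rfl⟩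
  rw [hset, trie_atom hX _ w, Finset.card_image_of_injective _ he, Finset.card_univ,
    Fintype.card_prod, Fintype.card_fin, Fintype.card_fin]

lemma trie_cylinder (hX : TrieModel P X) {n m : ℕ} (κ : Fin n → ℕ) (hκ : Function.Injective κ)
    (S : Finset ((Fin n × Fin m) → Bool)) :
    P {ω | (fun p : Fin n × Fin m => X (κ p.1) ω (p.2 : ℕ)) ∈ (S : Set _)} =
      S.card * 2⁻¹ ^ (n * m) := by
  classical
  have hu : {ω | (fun p : Fin n × Fin m => X (κ p.1) ω (p.2 : ℕ)) ∈ (S : Set _)} =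
      ⋃ v ∈ S, {ω | ∀ p : Fin n × Fin m, X (κ p.1) ω (p.2 : ℕ) = v p} := by
    ext ω
    simp only [Set.mem_setOf_eq, Set.mem_iUnion, Finset.mem_coe]
    constructor
    · intro h
      exact ⟨_, h, fun p => rfl⟩
    · rintro ⟨v, hv, hp⟩
      have : (fun p : Fin n × Fin m => X (κ p.1) ω (p.2 : ℕ)) = v := funext hp
      rw [this]; exact hv
  rw [hu, measure_biUnion_finset ?disj ?meas]
  · rw [Finset.sum_congr rfl fun v _ => trie_atom' hX κ hκ v, Finset.sum_const, nsmul_eq_mul]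
  case disj =>
    intro v hv v' hv' hne
    refine Set.disjoint_left.2 fun ω h1 h2 => hne ?_
    exact funext fun p => (h1 p).symm.trans (h2 p)
  case meas =>
    intro v _
    have : {ω | ∀ p : Fin n × Fin m, X (κ p.1) ω (p.2 : ℕ) = v p} =
        ⋂ p : Fin n × Fin m, {ω | X (κ p.1) ω (p.2 : ℕ) = v p} := by
      ext ω; simp [Set.mem_iInter]
    rw [this]
    exact MeasurableSet.iInter fun p => trie_bit_meas hX _ _ _

lemma trie_pair_eq_null (hX : TrieModel P X) {i j : ℕ} (hij : i ≠ j) :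
    P {ω | X i ω = X j ω} = 0 := by
  classical
  have key : ∀ M : ℕ, P {ω | X i ω = X j ω} ≤ 2⁻¹ ^ M := by
    intro M
    have hκ : Function.Injective (![i, j] : Fin 2 → ℕ) := by
      intro a b h
      fin_cases a <;> fin_cases b <;> simp_all [Matrix.cons_val_zero, Matrix.cons_val_one]
    set S : Finset ((Fin 2 × Fin M) → Bool) :=
      Finset.univ.image (fun r : Fin M → Bool => fun p : Fin 2 × Fin M => r p.2) with hS
    have hinj : Function.Injective (fun r : Fin M → Bool => fun p : Fin 2 × Fin M => r p.2) := by
      intro r r' h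
      funext k
      exact congrFun h (0, k)
    have hsub : {ω | X i ω = X j ω} ⊆
        {ω | (fun p : Fin 2 × Fin M => X ((![i, j] : Fin 2 → ℕ) p.1) ω (p.2 : ℕ)) ∈ (S : Set _)} := by
      intro ω h
      simp only [Set.mem_setOf_eq] at h ⊢
      rw [hS]
      simp only [Finset.coe_image, Set.mem_image, Finset.coe_univ, Set.mem_univ, true_and]
      refine ⟨fun k => X i ω k, funext fun p => ?_⟩
      rcases p with ⟨a, k⟩
      fin_cases a
      · simp
      · exact congrFun h k
    have hcard : S.card = 2 ^ M := by
      rw [hS, Finset.card_image_of_injective _ hinj, Finset.card_univ]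
      simp
    calc P {ω | X i ω = X j ω} ≤ S.card * 2⁻¹ ^ (2 * M) :=
          (trie_cylinder hX _ hκ S) ▸ measure_mono hsub
      _ = 2⁻¹ ^ M := by
          rw [hcard, two_mul, pow_add, ← mul_assoc]
          norm_num
          rw [← ENNReal.inv_pow, ENNReal.mul_inv_cancel (by positivity) (by simp), one_mul]
  refine le_antisymm ?_ zero_le
  exact ge_of_tendsto' (ENNReal.tendsto_pow_atTop_nhds_zero_of_lt_one
    (by simp [ENNReal.inv_lt_one])) key

lemma trie_card_ne {α : Type*} [Fintype α] [DecidableEq α] (a : α) :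
    Fintype.card {x : α // x ≠ a} = Fintype.card α - 1 := by
  classical
  have := Fintype.card_subtype_compl (fun x : α => x = a)
  simpa [Fintype.card_subtype_eq] using this

lemma trie_count (n m : ℕ) (i : Fin n) :
    (Finset.univ.filter (fun v : Fin n × Fin m → Bool =>
      ∀ j : Fin n, j ≠ i → (fun k => v (j, k)) ≠ (fun k => v (i, k)))).card
      = 2 ^ m * (2 ^ m - 1) ^ (n - 1) := by
  classical
  rw [Finset.card_eq_sum_card_fiberwise
    (f := fun v : Fin n × Fin m → Bool => (fun k => v (i, k)))
    (t := (Finset.univ : Finset (Fin m → Bool))) (fun v _ => Finset.mem_univ _)]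
  have hfib : ∀ r : Fin m → Bool,
      ((Finset.univ.filter (fun v : Fin n × Fin m → Bool =>
        ∀ j : Fin n, j ≠ i → (fun k => v (j, k)) ≠ (fun k => v (i, k)))).filter
          (fun v => (fun k => v (i, k)) = r)).card = (2 ^ m - 1) ^ (n - 1) := by
    intro r
    have hcard : ((Finset.univ.filter (fun v : Fin n × Fin m → Bool =>
        ∀ j : Fin n, j ≠ i → (fun k => v (j, k)) ≠ (fun k => v (i, k)))).filter
          (fun v => (fun k => v (i, k)) = r)).card
        = Fintype.card {v : Fin n × Fin m → Bool //
            (∀ j : Fin n, j ≠ i → (fun k => v (j, k)) ≠ (fun k => v (i, k))) ∧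
              (fun k => v (i, k)) = r} := by
      rw [Fintype.card_subtype]
      congr 1
      ext v
      simp [Finset.mem_filter, and_assoc]
    rw [hcard]
    have e : {v : Fin n × Fin m → Bool //
        (∀ j : Fin n, j ≠ i → (fun k => v (j, k)) ≠ (fun k => v (i, k))) ∧
          (fun k => v (i, k)) = r} ≃
        ({j : Fin n // j ≠ i} → {r' : Fin m → Bool // r' ≠ r}) := by
      refine
        { toFun := fun v j => ⟨fun k => v.1 (j.1, k), by
            have h := v.2.1 j.1 j.2
            rw [v.2.2] at h
            exact h⟩
          invFun := fun f => ⟨fun p => if h : p.1 = i then r p.2 else (f ⟨p.1, h⟩).1 p.2, ?_, ?_⟩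
          left_inv := ?_
          right_inv := ?_ }
      · intro j hj
        have hne := (f ⟨j, hj⟩).2
        intro heq
        apply hne
        funext k
        have h1 := congrFun heq k
        simpa [dif_neg hj] using h1
      · funext k
        simp
      · intro v
        apply Subtype.ext
        funext p
        rcases p with ⟨j, k⟩
        dsimp only
        split
        · next h =>
            subst h
            exact (congrFun v.2.2 k).symm
        · rfl
      · intro f
        funext j
        apply Subtype.ext
        funext k
        simp [dif_neg j.2]
    rw [Fintype.card_congr e, Fintype.card_fun, trie_card_ne, trie_card_ne, Fintype.card_fun,
      Fintype.card_bool, Fintype.card_fin, Fintype.card_fin]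
  rw [Finset.sum_congr rfl fun r _ => hfib r, Finset.sum_const, Finset.card_univ,
    Fintype.card_fun, Fintype.card_bool, Fintype.card_fin, smul_eq_mul]

lemma lcp_le_of_ne {x y : ℕ → Bool} {k : ℕ} (h : x k ≠ y k) : lcp x y ≤ k := by
  apply csSup_le ⟨0, by simp⟩
  intro m hm
  by_contra hgt
  exact h (hm k (by omega))

lemma le_lcp {x y : ℕ → Bool} {m : ℕ} (hagree : ∀ k < m, x k = y k) (hne : x ≠ y) :
    m ≤ lcp x y := by
  obtain ⟨K, hK⟩ := Function.ne_iff.1 hne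
  apply le_csSup
  · exact ⟨K, fun m' hm' => by
      by_contra hgt
      exact hK (hm' K (by omega))⟩
  · exact hagree

lemma trie_bit_eq_meas (hX : TrieModel P X) (a b k : ℕ) :
    MeasurableSet {ω | X a ω k = X b ω k} := by
  have : {ω | X a ω k = X b ω k} =
      ({ω | X a ω k = true} ∩ {ω | X b ω k = true}) ∪
        ({ω | X a ω k = false} ∩ {ω | X b ω k = false}) := by
    ext ω
    rcases Bool.dichotomy (X a ω k) with h | h <;> rcases Bool.dichotomy (X b ω k) with h' | h' <;>
      simp [h, h']
  rw [this]
  have hm : ∀ (c : ℕ) (b : Bool), MeasurableSet {ω | X c ω k = b} :=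
    fun c b => hX.measBit c k (measurableSet_singleton b)
  exact ((hm a true).inter (hm b true)).union ((hm a false).inter (hm b false))

lemma trie_lcp_ge_eq (a b l : ℕ) :
    {ω | l + 1 ≤ lcp (X a ω) (X b ω)} =
      (⋂ k ∈ Finset.range (l + 1), {ω | X a ω k = X b ω k}) ∩
        ⋃ K : ℕ, {ω | X a ω K ≠ X b ω K} := by
  ext ω
  simp only [Set.mem_setOf_eq, Set.mem_inter_iff, Set.mem_iInter, Set.mem_iUnion,
    Finset.mem_range]
  constructor
  · intro h
    have hKex : ∃ K, X a ω K ≠ X b ω K := by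
      by_contra hK
      push_neg at hK
      have hset : {m : ℕ | ∀ k < m, X a ω k = X b ω k} = Set.univ := by
        ext m'
        simp only [Set.mem_setOf_eq, Set.mem_univ, iff_true]
        exact fun k _ => hK k
      have hnb : ¬BddAbove {m : ℕ | ∀ k < m, X a ω k = X b ω k} := by
        rw [hset]
        rintro ⟨u, hu⟩
        have := hu (Set.mem_univ (u + 1))
        omega
      have h0 : lcp (X a ω) (X b ω) = 0 := by
        rw [lcp, csSup_of_not_bddAbove hnb, csSup_empty]
        rfl
      omega
    obtain ⟨K, hK⟩ := hKex
    have hbdd : BddAbove {m : ℕ | ∀ k < m, X a ω k = X b ω k} :=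
      ⟨K, fun m' hm' => by by_contra hgt; exact hK (hm' K (by omega))⟩
    have hmem : ∀ k < lcp (X a ω) (X b ω), X a ω k = X b ω k :=
      Nat.sSup_mem (s := {m : ℕ | ∀ k < m, X a ω k = X b ω k}) ⟨0, by simp⟩ hbdd
    exact ⟨fun k hk => hmem k (by omega), K, hK⟩
  · rintro ⟨h1, K, hK⟩
    exact le_lcp (fun k hk => h1 k hk) (Function.ne_iff.2 ⟨K, hK⟩)

lemma trie_lcp_le_meas (hX : TrieModel P X) (a b l : ℕ) :
    MeasurableSet {ω | lcp (X a ω) (X b ω) ≤ l} := by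
  have : {ω | lcp (X a ω) (X b ω) ≤ l} = {ω | l + 1 ≤ lcp (X a ω) (X b ω)}ᶜ := by
    ext ω; simp only [Set.mem_setOf_eq, Set.mem_compl_iff, not_le]; omega
  rw [this, trie_lcp_ge_eq]
  exact (MeasurableSet.inter
    (Finset.measurableSet_biInter _ fun k _ => trie_bit_eq_meas hX a b k)
    (MeasurableSet.iUnion fun K => (trie_bit_eq_meas hX a b K).compl)).compl

lemma trie_depth_le_empty (n i0 : ℕ) :
    {ω | trieDepth (fun k => X k ω) n i0 ≤ 0} = (∅ : Set Ω) := by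
  ext ω; simp [trieDepth]

lemma trie_depth_le_eq (n i0 m : ℕ) (hm : 1 ≤ m) :
    {ω | trieDepth (fun k => X k ω) n i0 ≤ m} =
      ⋂ j ∈ (Finset.range n).erase i0, {ω | lcp (X i0 ω) (X j ω) ≤ m - 1} := by
  ext ω
  simp only [Set.mem_setOf_eq, Set.mem_iInter, trieDepth]
  constructor
  · intro h j hj
    have hs : ((Finset.range n).erase i0).sup (fun j => lcp (X i0 ω) (X j ω)) ≤ m - 1 := by
      omega
    exact le_trans (Finset.le_sup (f := fun j => lcp (X i0 ω) (X j ω)) hj) hs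
  · intro h
    have hs : ((Finset.range n).erase i0).sup (fun j => lcp (X i0 ω) (X j ω)) ≤ m - 1 :=
      Finset.sup_le h
    omega

lemma trie_depth_le_meas (hX : TrieModel P X) (n i0 m : ℕ) :
    MeasurableSet {ω | trieDepth (fun k => X k ω) n i0 ≤ m} := by
  rcases Nat.eq_zero_or_pos m with rfl | hm
  · rw [trie_depth_le_empty]; exact MeasurableSet.empty
  · rw [trie_depth_le_eq n i0 m hm]
    exact Finset.measurableSet_biInter _ fun j _ => trie_lcp_le_meas hX i0 j (m - 1)

def trieA (m : ℕ) : ℝ := 1 - (2⁻¹ : ℝ) ^ m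

lemma trieA_nonneg (m : ℕ) : 0 ≤ trieA m := by
  have h : (2⁻¹ : ℝ) ^ m ≤ 1 := pow_le_one₀ (by norm_num) (by norm_num)
  simp only [trieA]; linarith

lemma trieA_mono {m m' : ℕ} (h : m ≤ m') : trieA m ≤ trieA m' := by
  have h2 := pow_le_pow_of_le_one (by norm_num : (0:ℝ) ≤ 2⁻¹) (by norm_num) h
  simp only [trieA]; linarith

lemma trie_depth_cdf (hX : TrieModel P X) {n i0 m : ℕ} (hn : 2 ≤ n) (hi0 : i0 < n)
    (hm : 1 ≤ m) :
    P {ω | trieDepth (fun k => X k ω) n i0 ≤ m} = ENNReal.ofReal (trieA m ^ (n - 1)) := by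
  classical
  set i : Fin n := ⟨i0, hi0⟩ with hi
  set S : Finset ((Fin n × Fin m) → Bool) := Finset.univ.filter (fun v =>
    ∀ j : Fin n, j ≠ i → (fun k => v (j, k)) ≠ (fun k => v (i, k))) with hS
  set E : Set Ω := {ω | (fun p : Fin n × Fin m => X ((p.1 : ℕ)) ω ((p.2 : ℕ))) ∈ (S : Set _)}
    with hE
  have hEmem : ∀ ω, ω ∈ E ↔
      ∀ j : Fin n, j ≠ i → ∃ k : Fin m, X (j : ℕ) ω (k : ℕ) ≠ X i0 ω (k : ℕ) := by
    intro ω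
    rw [hE, hS]
    simp only [Set.mem_setOf_eq, Finset.coe_filter, Finset.mem_univ, true_and]
    constructor
    · intro h j hj
      obtain ⟨k, hk⟩ := Function.ne_iff.1 (h j hj)
      exact ⟨k, hk⟩
    · intro h j hj
      obtain ⟨k, hk⟩ := h j hj
      exact Function.ne_iff.2 ⟨k, hk⟩
  set A := (Finset.range n).erase i0 with hA
  set G : Set Ω := ⋃ j ∈ A, {ω | X i0 ω = X j ω} with hGdef
  have hG : P G = 0 := by
    refine le_antisymm ?_ zero_le
    refine le_trans (measure_biUnion_finset_le A _) (le_of_eq ?_)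
    refine Finset.sum_eq_zero fun j hj => ?_
    exact trie_pair_eq_null hX (fun h => (Finset.mem_erase.1 hj).1 h.symm)
  set L : Set Ω := ⋂ j ∈ A, {ω | lcp (X i0 ω) (X j ω) ≤ m - 1} with hL
  have hEL : E ⊆ L := by
    intro ω hω
    simp only [hL, Set.mem_iInter, Set.mem_setOf_eq]
    intro j hj
    have hjn : j < n := Finset.mem_range.1 (Finset.mem_of_mem_erase hj)
    have hjne : (⟨j, hjn⟩ : Fin n) ≠ i := by
      intro h
      exact (Finset.mem_erase.1 hj).1 (congrArg Fin.val h)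
    obtain ⟨k, hk⟩ := (hEmem ω).1 hω ⟨j, hjn⟩ hjne
    have : lcp (X i0 ω) (X j ω) ≤ (k : ℕ) := lcp_le_of_ne (fun h => hk (h.symm))
    have hkm : (k : ℕ) < m := k.isLt
    omega
  have hLEG : L ⊆ E ∪ G := by
    intro ω hω
    by_cases hg : ω ∈ G
    · exact Or.inr hg
    · left
      rw [hEmem ω]
      intro j hj
      have hjA : (j : ℕ) ∈ A := by
        refine Finset.mem_erase.2 ⟨fun h => hj (Fin.ext h), Finset.mem_range.2 j.isLt⟩
      have hne : X i0 ω ≠ X (j : ℕ) ω := by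
        intro h
        exact hg (Set.mem_biUnion hjA h)
      by_contra hcon
      push_neg at hcon
      have hagree : ∀ k < m, X i0 ω k = X (j : ℕ) ω k := fun k hk =>
        (hcon ⟨k, hk⟩).symm
      have hge : m ≤ lcp (X i0 ω) (X (j : ℕ) ω) := le_lcp hagree hne
      have hle : lcp (X i0 ω) (X (j : ℕ) ω) ≤ m - 1 := by
        have := hω
        simp only [hL, Set.mem_iInter, Set.mem_setOf_eq] at this
        exact this _ hjA
      omega
  have hPE : P {ω | trieDepth (fun k => X k ω) n i0 ≤ m} = P E := by
    rw [trie_depth_le_eq n i0 m hm, ← hA, ← hL]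
    refine le_antisymm ?_ (measure_mono hEL)
    calc P L ≤ P (E ∪ G) := measure_mono hLEG
      _ ≤ P E + P G := measure_union_le _ _
      _ = P E := by rw [hG, add_zero]
  rw [hPE, hE, trie_cylinder hX (Fin.val : Fin n → ℕ) Fin.val_injective S, hS, trie_count n m i]
  -- now the numeric identity
  obtain ⟨N, rfl⟩ : ∃ N, n = 2 + N := ⟨n - 2, by omega⟩
  have hle2 : (1 : ℕ) ≤ 2 ^ m := Nat.one_le_two_pow
  have h2 : ((2 : ℝ≥0∞))⁻¹ ^ ((2 + N) * m) = ENNReal.ofReal ((2⁻¹ : ℝ) ^ ((2 + N) * m)) := by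
    rw [ENNReal.ofReal_pow (by norm_num)]
    congr 1
    rw [ENNReal.ofReal_inv_of_pos (by norm_num)]
    norm_num
  rw [h2, ← ENNReal.ofReal_natCast, ← ENNReal.ofReal_mul (by positivity)]
  congr 1
  have hNn : (2 + N) - 1 = N + 1 := by omega
  rw [hNn]
  push_cast [hle2]
  have key : trieA m = ((2 : ℝ) ^ m - 1) * 2⁻¹ ^ m := by
    rw [trieA, sub_mul, one_mul, ← mul_pow]
    norm_num
  have hpow : (2 : ℝ) ^ m * 2⁻¹ ^ m = 1 := by
    rw [← mul_pow]; norm_num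
  rw [key, mul_pow, ← pow_mul]
  have hexp : (2 + N) * m = m + m * (N + 1) := by ring
  rw [hexp, pow_add]
  linear_combination ((2 ^ m - 1 : ℝ) ^ (N + 1) * 2⁻¹ ^ (m * (N + 1))) * hpow

def trieQ (n m : ℕ) : ℝ := trieA m ^ (n - 1) - trieA (m - 1) ^ (n - 1)

lemma trieA_le_one (m : ℕ) : trieA m ≤ 1 := by
  have h : (0:ℝ) ≤ 2⁻¹ ^ m := by positivity
  simp only [trieA]; linarith

lemma trieQ_nonneg (n m : ℕ) : 0 ≤ trieQ n m :=
  sub_nonneg.2 (pow_le_pow_left₀ (trieA_nonneg _) (trieA_mono (by omega)) _)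

lemma trieQ_le (n m : ℕ) : trieQ n m ≤ (n : ℝ) * (2 * 2⁻¹ ^ m) := by
  rcases m with _ | m'
  · simp only [trieQ, Nat.zero_sub, sub_self]
    positivity
  · have hx : (0:ℝ) ≤ 2⁻¹ ^ m' := by positivity
    have hB : 1 - (n - 1 : ℕ) * (2⁻¹:ℝ) ^ m' ≤ trieA m' ^ (n - 1) := by
      have := one_add_mul_le_pow (a := -(2⁻¹:ℝ) ^ m') (by nlinarith [pow_le_one₀ (by norm_num : (0:ℝ) ≤ 2⁻¹) (by norm_num : (2⁻¹:ℝ) ≤ 1) (n := m')]) (n - 1)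
      calc 1 - (n - 1 : ℕ) * (2⁻¹:ℝ) ^ m' = 1 + (n-1 : ℕ) * (-(2⁻¹:ℝ)^m') := by ring
        _ ≤ (1 + -(2⁻¹:ℝ)^m') ^ (n-1) := this
        _ = trieA m' ^ (n - 1) := by rw [trieA]; ring_nf
    have h1 : trieQ n (m' + 1) ≤ 1 - trieA m' ^ (n - 1) := by
      have := pow_le_one₀ (trieA_nonneg (m' + 1)) (trieA_le_one (m' + 1)) (n := n - 1)
      simp only [trieQ, Nat.add_sub_cancel]
      linarith
    calc trieQ n (m' + 1) ≤ 1 - trieA m' ^ (n - 1) := h1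
      _ ≤ (n - 1 : ℕ) * (2⁻¹:ℝ) ^ m' := by linarith
      _ ≤ (n:ℝ) * (2⁻¹:ℝ) ^ m' := by
          have hc : ((n - 1 : ℕ) : ℝ) ≤ (n : ℝ) := by
            exact_mod_cast Nat.cast_le.2 (Nat.sub_le n 1)
          nlinarith
      _ = (n:ℝ) * (2 * 2⁻¹ ^ (m' + 1)) := by
          rw [pow_succ]; ring

lemma trie_depth_eq_zero_empty (n i0 : ℕ) :
    {ω | trieDepth (fun k => X k ω) n i0 = 0} = (∅ : Set Ω) := by
  ext ω; simp [trieDepth]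

lemma trie_depth_pmf (hX : TrieModel P X) {n i0 m : ℕ} (hn : 2 ≤ n) (hi0 : i0 < n)
    (hm : 1 ≤ m) :
    P {ω | trieDepth (fun k => X k ω) n i0 = m} = ENNReal.ofReal (trieQ n m) := by
  have hmeasm : MeasurableSet {ω | trieDepth (fun k => X k ω) n i0 = m} := by
    have : {ω | trieDepth (fun k => X k ω) n i0 = m} =
        {ω | trieDepth (fun k => X k ω) n i0 ≤ m} \
          {ω | trieDepth (fun k => X k ω) n i0 ≤ m - 1} := by
      ext ω
      simp only [Set.mem_setOf_eq, Set.mem_diff]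
      omega
    rw [this]
    exact (trie_depth_le_meas hX n i0 m).diff (trie_depth_le_meas hX n i0 (m - 1))
  have hsplit : {ω | trieDepth (fun k => X k ω) n i0 ≤ m} =
      {ω | trieDepth (fun k => X k ω) n i0 ≤ m - 1} ∪
        {ω | trieDepth (fun k => X k ω) n i0 = m} := by
    ext ω
    simp only [Set.mem_setOf_eq, Set.mem_union]
    omega
  have hdisj : Disjoint {ω | trieDepth (fun k => X k ω) n i0 ≤ m - 1}
      {ω | trieDepth (fun k => X k ω) n i0 = m} := by
    rw [Set.disjoint_left]
    intro ω h1 h2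
    simp only [Set.mem_setOf_eq] at h1 h2
    omega
  have hPm1 : P {ω | trieDepth (fun k => X k ω) n i0 ≤ m - 1} =
      ENNReal.ofReal (trieA (m - 1) ^ (n - 1)) := by
    rcases Nat.eq_zero_or_pos (m - 1) with h0 | hpos
    · rw [h0, trie_depth_le_empty, measure_empty]
      have : trieA 0 = 0 := by simp [trieA]
      rw [this, zero_pow (by omega), ENNReal.ofReal_zero]
    · exact trie_depth_cdf hX hn hi0 hpos
  have hadd : ENNReal.ofReal (trieA m ^ (n - 1)) =
      ENNReal.ofReal (trieA (m - 1) ^ (n - 1)) +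
        P {ω | trieDepth (fun k => X k ω) n i0 = m} := by
    rw [← trie_depth_cdf hX hn hi0 hm, hsplit, measure_union hdisj hmeasm, hPm1]
  have hq : trieA m ^ (n - 1) = trieA (m - 1) ^ (n - 1) + trieQ n m := by
    simp [trieQ]
  rw [hq, ENNReal.ofReal_add (pow_nonneg (trieA_nonneg (m-1)) _) (trieQ_nonneg n m)] at hadd
  exact ((ENNReal.add_right_inj ENNReal.ofReal_ne_top).1 hadd).symm

lemma trie_delta_pmf (hX : TrieModel P X) {δ : ℕ → Ω → ℕ} (hδ : IsTrieDepthRV P X δ)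
    {n : ℕ} (hn : 2 ≤ n) (m : ℕ) :
    P {ω | δ n ω = m} = ENNReal.ofReal (trieQ n m) := by
  rw [hδ.2.2 n hn m]
  rcases Nat.eq_zero_or_pos m with rfl | hm
  · have hz : ∀ i ∈ Finset.range n, P {ω | trieDepth (fun k => X k ω) n i = 0} = 0 := by
      intro i _
      rw [trie_depth_eq_zero_empty, measure_empty]
    rw [Finset.sum_congr rfl hz, Finset.sum_const, smul_zero, mul_zero]
    simp [trieQ]
  · have hz : ∀ i ∈ Finset.range n, P {ω | trieDepth (fun k => X k ω) n i = m} =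
        ENNReal.ofReal (trieQ n m) := fun i hi =>
      trie_depth_pmf hX hn (Finset.mem_range.1 hi) hm
    rw [Finset.sum_congr rfl hz, Finset.sum_const, Finset.card_range, nsmul_eq_mul,
      ← mul_assoc, ENNReal.inv_mul_cancel (by exact_mod_cast (by omega : n ≠ 0))
        (ENNReal.natCast_ne_top n), one_mul]

lemma trie_delta_one (hX : TrieModel P X) {δ : ℕ → Ω → ℕ} (hδ : IsTrieDepthRV P X δ)
    (t : ℝ) : ∫ ω, Real.exp (t * δ 1 ω) ∂P = 1 := by
  have := hX.prob
  have hmeas : MeasurableSet {ω | δ 1 ω = 0} := (hδ.1 1) (measurableSet_singleton 0)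
  have hae : ∀ᵐ ω ∂P, δ 1 ω = 0 := by
    rw [ae_iff]
    have : {ω | ¬ δ 1 ω = 0} = {ω | δ 1 ω = 0}ᶜ := rfl
    rw [this, measure_compl hmeas (measure_ne_top _ _), hδ.2.1, measure_univ, tsub_self]
  have : (fun ω => Real.exp (t * δ 1 ω)) =ᵐ[P] fun _ => (1 : ℝ) := by
    filter_upwards [hae] with ω hω
    rw [hω]
    simp
  rw [integral_congr_ae this]
  simp

lemma trie_summable_geom {t : ℝ} (ht : Real.exp t < 2) (c : ℝ) :
    Summable (fun m : ℕ => c * (Real.exp t * 2⁻¹) ^ m) := by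
  apply Summable.mul_left
  apply summable_geometric_of_lt_one (by positivity)
  rw [show (1:ℝ) = 2 * 2⁻¹ by norm_num]
  exact mul_lt_mul_of_pos_right ht (by norm_num)

lemma trie_term_le (n m : ℕ) {t : ℝ} :
    trieQ n m * Real.exp (t * m) ≤ (2 * n) * (Real.exp t * 2⁻¹) ^ m := by
  have h1 : trieQ n m * Real.exp (t * m) ≤ ((n : ℝ) * (2 * 2⁻¹ ^ m)) * Real.exp (t * m) :=
    mul_le_mul_of_nonneg_right (trieQ_le n m) (Real.exp_nonneg _)
  calc trieQ n m * Real.exp (t * m) ≤ ((n : ℝ) * (2 * 2⁻¹ ^ m)) * Real.exp (t * m) := h1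
    _ = (2 * n) * (Real.exp t * 2⁻¹) ^ m := by
        rw [mul_pow, mul_comm t (m : ℝ), Real.exp_nat_mul]
        ring

lemma trie_summable_q (n : ℕ) {t : ℝ} (ht : Real.exp t < 2) :
    Summable (fun m : ℕ => trieQ n m * Real.exp (t * m)) := by
  apply Summable.of_nonneg_of_le (fun m => mul_nonneg (trieQ_nonneg n m) (Real.exp_nonneg _))
    (fun m => trie_term_le n m) (trie_summable_geom ht (2 * n))

lemma trie_integral (hX : TrieModel P X) {δ : ℕ → Ω → ℕ} (hδ : IsTrieDepthRV P X δ)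
    {n : ℕ} (hn : 2 ≤ n) {t : ℝ} (ht : Real.exp t < 2) :
    ∫ ω, Real.exp (t * δ n ω) ∂P = ∑' m : ℕ, trieQ n m * Real.exp (t * m) := by
  classical
  set μ := P.map (δ n) with hμ
  have hsing : ∀ m : ℕ, μ {m} = ENNReal.ofReal (trieQ n m) := by
    intro m
    rw [hμ, Measure.map_apply (hδ.1 n) (measurableSet_singleton m)]
    have : δ n ⁻¹' {m} = {ω | δ n ω = m} := rfl
    rw [this, trie_delta_pmf hX hδ hn m]
  have hfmeas : Measurable (fun x : ℕ => Real.exp (t * x)) := measurable_from_nat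
  have hint : Integrable (fun x : ℕ => Real.exp (t * x)) μ := by
    refine ⟨hfmeas.aestronglyMeasurable, ?_⟩
    rw [HasFiniteIntegral, lintegral_countable']
    have hle : ∀ m : ℕ, ‖Real.exp (t * m)‖ₑ * μ {m} ≤
        ENNReal.ofReal ((2 * n) * (Real.exp t * 2⁻¹) ^ m) := by
      intro m
      rw [Real.enorm_eq_ofReal (Real.exp_nonneg _), hsing m,
        ← ENNReal.ofReal_mul (Real.exp_nonneg _)]
      apply ENNReal.ofReal_le_ofReal
      rw [mul_comm]
      exact trie_term_le n m
    calc (∑' m : ℕ, ‖Real.exp (t * m)‖ₑ * μ {m})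
        ≤ ∑' m : ℕ, ENNReal.ofReal ((2 * n) * (Real.exp t * 2⁻¹) ^ m) :=
          ENNReal.tsum_le_tsum hle
      _ = ENNReal.ofReal (∑' m : ℕ, (2 * n) * (Real.exp t * 2⁻¹) ^ m) :=
          (ENNReal.ofReal_tsum_of_nonneg (fun m => by positivity)
            (trie_summable_geom ht (2 * n))).symm
      _ < ⊤ := ENNReal.ofReal_lt_top
  have hmap : ∫ ω, Real.exp (t * δ n ω) ∂P = ∫ x, Real.exp (t * x) ∂μ := by
    rw [hμ, integral_map (hδ.1 n).aemeasurable hfmeas.aestronglyMeasurable]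
  rw [hmap, integral_countable' hint]
  apply tsum_congr
  intro m
  rw [measureReal_def, hsing m, smul_eq_mul, ENNReal.toReal_ofReal (trieQ_nonneg n m)]

lemma trieQ_zero (n : ℕ) : trieQ n 0 = 0 := by simp [trieQ]

lemma trieQ_succ (n m : ℕ) :
    trieQ (n + 2) (m + 1) = trieA (m + 1) ^ (n + 1) - trieA m ^ (n + 1) := by
  simp [trieQ]

def trieU (t z : ℝ) (n m : ℕ) : ℝ :=
  (trieQ (n + 2) (m + 1) * Real.exp (t * ((m + 1 : ℕ) : ℝ))) *
    (z ^ (n + 2) / ((n + 1).factorial : ℝ))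

def trieW (t z : ℝ) (m : ℕ) : ℝ :=
  Real.exp (t * ((m + 1 : ℕ) : ℝ)) * (Real.exp (trieA (m + 1) * z) - Real.exp (trieA m * z))

lemma trie_exp_tail (x : ℝ) :
    ∑' n : ℕ, x ^ (n + 1) / ((n + 1).factorial : ℝ) = Real.exp x - 1 := by
  have hsum := Real.summable_pow_div_factorial x
  have hexp : Real.exp x = ∑' n : ℕ, x ^ n / (n.factorial : ℝ) := by
    rw [Real.exp_eq_exp_ℝ, NormedSpace.exp_eq_tsum_div]
  rw [Summable.tsum_eq_zero_add hsum] at hexp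
  simp only [pow_zero, Nat.factorial_zero, Nat.cast_one] at hexp
  rw [hexp]
  ring

lemma trie_master {t : ℝ} (ht2 : Real.exp t < 2) (z : ℝ) (E : ℕ → ℝ) (hE1 : E 1 = 1)
    (hE : ∀ n : ℕ, E (n + 2) = ∑' m : ℕ, trieQ (n + 2) m * Real.exp (t * m)) :
    Summable (fun j : ℕ => (j : ℝ) * E j * z ^ j / (j.factorial : ℝ)) ∧
    Summable (fun m : ℕ => z * trieW t z m) ∧
    (∑' j : ℕ, (j : ℝ) * E j * z ^ j / (j.factorial : ℝ)) = z + ∑' m : ℕ, z * trieW t z m := by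
  classical
  set g : ℕ → ℝ := fun j => (j : ℝ) * E j * z ^ j / (j.factorial : ℝ) with hg
  set G : ℕ → ℝ := fun n => (4 * |z| ^ 2) * (|z| ^ n / (n.factorial : ℝ)) with hG
  set H : ℕ → ℝ := fun m => (Real.exp t * 2⁻¹) ^ (m + 1) with hH
  have hGnn : ∀ n, 0 ≤ G n := fun n => by positivity
  have hHnn : ∀ m, 0 ≤ H m := fun m => by positivity
  have hGs : Summable G := (Real.summable_pow_div_factorial |z|).mul_left _
  have hHs : Summable H := by
    have h1 : Real.exp t * 2⁻¹ < 1 := by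
      rw [show (1 : ℝ) = 2 * 2⁻¹ by norm_num]
      exact mul_lt_mul_of_pos_right ht2 (by norm_num)
    exact (summable_nat_add_iff 1).2 (summable_geometric_of_lt_one (by positivity) h1)
  have hbound : ∀ p : ℕ × ℕ, ‖trieU t z p.1 p.2‖ ≤ G p.1 * H p.2 := by
    rintro ⟨n, m⟩
    have h0 : 0 ≤ trieQ (n + 2) (m + 1) * Real.exp (t * ((m + 1 : ℕ) : ℝ)) :=
      mul_nonneg (trieQ_nonneg _ _) (Real.exp_nonneg _)
    have hterm := trie_term_le (n + 2) (m + 1) (t := t)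
    have hfne : (0 : ℝ) < ((n + 1).factorial : ℝ) := by
      exact_mod_cast Nat.factorial_pos (n + 1)
    have habs : ‖trieU t z n m‖ = (trieQ (n + 2) (m + 1) * Real.exp (t * ((m + 1 : ℕ) : ℝ))) *
        (|z| ^ (n + 2) / ((n + 1).factorial : ℝ)) := by
      rw [trieU, Real.norm_eq_abs, abs_mul, abs_of_nonneg h0, abs_div, abs_pow, Nat.abs_cast]
    have hfact : (((n + 1).factorial : ℕ) : ℝ) = ((n : ℝ) + 1) * (n.factorial : ℝ) := by
      exact_mod_cast Nat.factorial_succ n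
    have e1 : (2 * (((n + 2 : ℕ)) : ℝ)) * (|z| ^ (n + 2) / ((n + 1).factorial : ℝ)) =
        (2 * ((n : ℝ) + 2) / ((n : ℝ) + 1)) * (|z| ^ 2 * (|z| ^ n / (n.factorial : ℝ))) := by
      have hn1 : ((n : ℝ) + 1) ≠ 0 := by positivity
      have hnf : (n.factorial : ℝ) ≠ 0 := by
        exact_mod_cast Nat.factorial_ne_zero n
      rw [hfact]
      push_cast
      rw [show n + 2 = 2 + n by ring, pow_add]
      field_simp
    have e2 : 2 * ((n : ℝ) + 2) / ((n : ℝ) + 1) ≤ 4 := by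
      rw [div_le_iff₀ (by positivity)]
      have := Nat.cast_nonneg (α := ℝ) n
      nlinarith
    calc ‖trieU t z n m‖
        = (trieQ (n + 2) (m + 1) * Real.exp (t * ((m + 1 : ℕ) : ℝ))) *
          (|z| ^ (n + 2) / ((n + 1).factorial : ℝ)) := habs
      _ ≤ ((2 * (((n + 2 : ℕ)) : ℝ)) * (Real.exp t * 2⁻¹) ^ (m + 1)) *
          (|z| ^ (n + 2) / ((n + 1).factorial : ℝ)) := by
          apply mul_le_mul_of_nonneg_right _ (by positivity)
          exact_mod_cast hterm
      _ = ((2 * (((n + 2 : ℕ)) : ℝ)) * (|z| ^ (n + 2) / ((n + 1).factorial : ℝ))) * H m := by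
          rw [hH]; ring
      _ ≤ G n * H m := by
          apply mul_le_mul_of_nonneg_right _ (hHnn m)
          rw [e1, hG]
          have hnn : (0:ℝ) ≤ |z| ^ 2 * (|z| ^ n / (n.factorial : ℝ)) := by positivity
          refine le_trans (mul_le_mul_of_nonneg_right e2 hnn) (le_of_eq ?_)
          show (4:ℝ) * (|z| ^ 2 * (|z| ^ n / (n.factorial : ℝ))) =
            4 * |z| ^ 2 * (|z| ^ n / (n.factorial : ℝ))
          ring
  have hU : Summable (fun p : ℕ × ℕ => trieU t z p.1 p.2) :=
    Summable.of_norm_bounded (hGs.mul_of_nonneg hHs hGnn hHnn) hbound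
  have hrow : ∀ n : ℕ, ∑' m : ℕ, trieU t z n m = g (n + 2) := by
    intro n
    have hfsum : Summable (fun m : ℕ => trieQ (n + 2) m * Real.exp (t * m)) :=
      trie_summable_q (n + 2) ht2
    have hshift : ∑' m : ℕ, trieQ (n + 2) (m + 1) * Real.exp (t * ((m + 1 : ℕ) : ℝ)) =
        E (n + 2) := by
      have h0 := Summable.tsum_eq_zero_add hfsum
      rw [trieQ_zero, zero_mul, zero_add] at h0
      rw [hE n, h0]
    have : (fun m : ℕ => trieU t z n m) = fun m : ℕ =>
        (trieQ (n + 2) (m + 1) * Real.exp (t * ((m + 1 : ℕ) : ℝ))) *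
          (z ^ (n + 2) / ((n + 1).factorial : ℝ)) := rfl
    rw [this, tsum_mul_right, hshift, hg]
    have hfact : (((n + 2).factorial : ℕ) : ℝ) = ((n : ℝ) + 2) * ((n + 1).factorial : ℝ) := by
      exact_mod_cast Nat.factorial_succ (n + 1)
    have hne : ((n + 1).factorial : ℝ) ≠ 0 := by
      exact_mod_cast Nat.factorial_ne_zero (n + 1)
    show E (n + 2) * (z ^ (n + 2) / ((n + 1).factorial : ℝ)) =
      ((n + 2 : ℕ) : ℝ) * E (n + 2) * z ^ (n + 2) / ((n + 2).factorial : ℝ)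
    rw [hfact]
    push_cast
    field_simp
  have hcol : ∀ m : ℕ, ∑' n : ℕ, trieU t z n m = z * trieW t z m := by
    intro m
    have hterm : ∀ n : ℕ, trieU t z n m =
        (Real.exp (t * ((m + 1 : ℕ) : ℝ)) * z) *
          ((trieA (m + 1) * z) ^ (n + 1) / ((n + 1).factorial : ℝ) -
            (trieA m * z) ^ (n + 1) / ((n + 1).factorial : ℝ)) := by
      intro n
      have hne : ((n + 1).factorial : ℝ) ≠ 0 := by
        exact_mod_cast Nat.factorial_ne_zero (n + 1)
      rw [trieU, trieQ_succ, mul_pow, mul_pow]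
      field_simp
      ring
    have hsa : Summable (fun n : ℕ => (trieA (m + 1) * z) ^ (n + 1) / ((n + 1).factorial : ℝ)) :=
      (summable_nat_add_iff (f := fun k : ℕ => (trieA (m + 1) * z) ^ k / (k.factorial : ℝ)) 1).2
        (Real.summable_pow_div_factorial _)
    have hsb : Summable (fun n : ℕ => (trieA m * z) ^ (n + 1) / ((n + 1).factorial : ℝ)) :=
      (summable_nat_add_iff (f := fun k : ℕ => (trieA m * z) ^ k / (k.factorial : ℝ)) 1).2
        (Real.summable_pow_div_factorial _)
    rw [tsum_congr hterm, tsum_mul_left, Summable.tsum_sub hsa hsb, trie_exp_tail, trie_exp_tail, trieW]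
    ring
  have hgs2 : Summable (fun n : ℕ => g (n + 2)) := (summable_congr hrow).1 hU.prod
  have hgs : Summable g := (summable_nat_add_iff (f := g) 2).1 hgs2
  have hws : Summable (fun m : ℕ => z * trieW t z m) :=
    (summable_congr hcol).1 hU.prod_symm.prod
  refine ⟨hgs, hws, ?_⟩
  have h1 : ∑' j : ℕ, g j = g 0 + ∑' n : ℕ, g (n + 1) := Summable.tsum_eq_zero_add hgs
  have h2 : ∑' n : ℕ, g (n + 1) = g 1 + ∑' n : ℕ, g (n + 2) :=
    Summable.tsum_eq_zero_add ((summable_nat_add_iff (f := g) 1).2 hgs)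
  have h3 : ∑' n : ℕ, g (n + 2) = ∑' m : ℕ, z * trieW t z m := by
    rw [← tsum_congr hrow, ← tsum_congr hcol]
    have hU' : Summable (Function.uncurry (trieU t z)) := hU
    exact (Summable.tsum_comm (f := trieU t z) hU').symm
  have hg0 : g 0 = 0 := by simp [hg]
  have hg1 : g 1 = z := by simp [hg, hE1]
  rw [h1, h2, h3, hg0, hg1, zero_add]

end TrieAux

/-- The functional equation `Ψ(t,z) = 2 e^t e^{z/2} Ψ(t,z/2) + z(1 − e^t)` for
`Ψ(t,z) = ∑_{j≥1} j E[e^{tδ_j}] z^j / j!`, all series being absolutely convergent. -/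
theorem trie_depth_mgf_functional_equation {Ω : Type*} [MeasurableSpace Ω] (P : Measure Ω)
    (X : ℕ → Ω → ℕ → Bool) (δ : ℕ → Ω → ℕ)
    (hX : TrieModel P X) (hδ : IsTrieDepthRV P X δ)
    (t : ℝ) (ht : |t| < Real.log 2) (z : ℝ) :
    Summable (fun j : ℕ =>
      (j : ℝ) * (∫ ω, Real.exp (t * δ j ω) ∂P) * z ^ j / (j.factorial : ℝ)) ∧
    Summable (fun j : ℕ =>
      (j : ℝ) * (∫ ω, Real.exp (t * δ j ω) ∂P) * (z / 2) ^ j / (j.factorial : ℝ)) ∧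
    (∑' j : ℕ, (j : ℝ) * (∫ ω, Real.exp (t * δ j ω) ∂P) * z ^ j / (j.factorial : ℝ)) =
      2 * Real.exp t * Real.exp (z / 2) *
          (∑' j : ℕ,
            (j : ℝ) * (∫ ω, Real.exp (t * δ j ω) ∂P) * (z / 2) ^ j /
              (j.factorial : ℝ)) +
        z * (1 - Real.exp t) := by
  have ht2 : Real.exp t < 2 := by
    have h1 : t < Real.log 2 := lt_of_le_of_lt (le_abs_self t) ht
    calc Real.exp t < Real.exp (Real.log 2) := Real.exp_lt_exp.2 h1
      _ = 2 := Real.exp_log (by norm_num)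
  have hE1 : (fun j => ∫ ω, Real.exp (t * δ j ω) ∂P) 1 = 1 := trie_delta_one hX hδ t
  have hE : ∀ n : ℕ, (fun j => ∫ ω, Real.exp (t * δ j ω) ∂P) (n + 2) =
      ∑' m : ℕ, trieQ (n + 2) m * Real.exp (t * m) :=
    fun n => trie_integral hX hδ (by omega) ht2
  obtain ⟨hs1, hw1, heq1⟩ :=
    trie_master ht2 z (fun j => ∫ ω, Real.exp (t * δ j ω) ∂P) hE1 hE
  obtain ⟨hs2, hw2, heq2⟩ :=
    trie_master ht2 (z / 2) (fun j => ∫ ω, Real.exp (t * δ j ω) ∂P) hE1 hE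
  refine ⟨hs1, hs2, ?_⟩
  have hshift : ∀ m : ℕ, z * trieW t z (m + 1) =
      (2 * Real.exp t * Real.exp (z / 2)) * (z / 2 * trieW t (z / 2) m) := by
    intro m
    have h1 : Real.exp (t * ((m + 1 + 1 : ℕ) : ℝ)) =
        Real.exp t * Real.exp (t * ((m + 1 : ℕ) : ℝ)) := by
      rw [← Real.exp_add]; congr 1; push_cast; ring
    have h2 : Real.exp (trieA (m + 1 + 1) * z) =
        Real.exp (z / 2) * Real.exp (trieA (m + 1) * (z / 2)) := by
      rw [← Real.exp_add]; congr 1; simp only [trieA, pow_succ]; ring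
    have h3 : Real.exp (trieA (m + 1) * z) =
        Real.exp (z / 2) * Real.exp (trieA m * (z / 2)) := by
      rw [← Real.exp_add]; congr 1; simp only [trieA, pow_succ]; ring
    rw [trieW, trieW, h1, h2, h3]
    ring
  have hsum2 : ∑' m : ℕ, z * trieW t z (m + 1) =
      (2 * Real.exp t * Real.exp (z / 2)) * ∑' m : ℕ, z / 2 * trieW t (z / 2) m := by
    rw [tsum_congr hshift, tsum_mul_left]
  have hW0 : z * trieW t z 0 = z * Real.exp t * (Real.exp (z / 2) - 1) := by
    have e1 : trieA (0 + 1) * z = z / 2 := by norm_num [trieA]; ring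
    have e2 : trieA 0 * z = 0 := by norm_num [trieA]
    rw [trieW, e1, e2, Real.exp_zero]
    norm_num
    ring
  have key : z + (∑' m : ℕ, z * trieW t z m) =
      2 * Real.exp t * Real.exp (z / 2) *
        (z / 2 + ∑' (m : ℕ), z / 2 * trieW t (z / 2) m) + z * (1 - Real.exp t) := by
    rw [Summable.tsum_eq_zero_add hw1, hW0, hsum2]
    ring
  rw [← heq1, ← heq2] at key
  exact key
end
end

section
/- For every complex s with −3 < Re s < −2, the integral ∫_0^∞ (1 − e^{−z})·z^{s+1} dz converges absolutely and equals −Γ(s+2). -/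
open MeasureTheory

noncomputable section

/-- For `−3 < Re s < −2`, the integral `∫_0^∞ (1 − e^{−z}) z^{s+1} dz` converges
absolutely and equals `−Γ(s+2)`. -/
theorem integral_one_sub_exp_neg (s : ℂ) (hs₁ : -3 < s.re) (hs₂ : s.re < -2) :
    IntegrableOn (fun z : ℝ => ((1 - Real.exp (-z) : ℝ) : ℂ) * (z : ℂ) ^ (s + 1))
      (Set.Ioi 0) ∧
    (∫ z : ℝ in Set.Ioi 0, ((1 - Real.exp (-z) : ℝ) : ℂ) * (z : ℂ) ^ (s + 1)) =
      -Complex.Gamma (s + 2) := by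
  set f : ℝ → ℂ := fun z : ℝ => ((1 - Real.exp (-z) : ℝ) : ℂ) * (z : ℂ) ^ (s + 1) with hf
  have hs20 : s + 2 ≠ 0 := by
    intro h
    have := congrArg Complex.re h
    simp [Complex.add_re] at this
    linarith
  -- norm of the integrand
  have hnorm : ∀ z : ℝ, 0 < z →
      ‖f z‖ = (1 - Real.exp (-z)) * z ^ (s.re + 1) := by
    intro z hz
    have h1 : (0:ℝ) ≤ 1 - Real.exp (-z) := by
      have : Real.exp (-z) ≤ 1 := Real.exp_le_one_iff.mpr (by linarith)
      linarith
    rw [hf, norm_mul, Complex.norm_real, Real.norm_eq_abs, abs_of_nonneg h1,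
      Complex.norm_cpow_eq_rpow_re_of_pos hz]
    simp [Complex.add_re]
  have hle : ∀ z : ℝ, 0 ≤ z → 1 - Real.exp (-z) ≤ z := by
    intro z _
    nlinarith [Real.add_one_le_exp (-z)]
  have h1e : ∀ z : ℝ, 0 ≤ z → 1 - Real.exp (-z) ≤ 1 := by
    intro z _
    nlinarith [Real.exp_pos (-z)]
  have h0e : ∀ z : ℝ, 0 ≤ z → 0 ≤ 1 - Real.exp (-z) := by
    intro z hz
    have : Real.exp (-z) ≤ 1 := Real.exp_le_one_iff.mpr (by linarith)
    linarith
  -- measurability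
  have hmeas : AEStronglyMeasurable f (volume.restrict (Set.Ioi (0:ℝ))) := by
    apply ContinuousOn.aestronglyMeasurable ?_ measurableSet_Ioi
    apply ContinuousOn.mul
    · exact (Complex.continuous_ofReal.comp (continuous_const.sub
        (Real.continuous_exp.comp continuous_neg))).continuousOn
    · intro x hx
      exact (Complex.continuousAt_ofReal_cpow_const x (s+1)
        (Or.inr (ne_of_gt hx))).continuousWithinAt
  -- integrability of f
  have hint : IntegrableOn f (Set.Ioi 0) := by
    rw [← Set.Ioc_union_Ioi_eq_Ioi (zero_le_one (α := ℝ)), integrableOn_union]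
    constructor
    · -- on (0,1]: bound by z ^ (s.re + 2)
      have hbd : IntegrableOn (fun z : ℝ => z ^ (s.re + 2)) (Set.Ioc 0 1) := by
        rw [← intervalIntegrable_iff_integrableOn_Ioc_of_le zero_le_one]
        exact intervalIntegral.intervalIntegrable_rpow' (by linarith)
      refine Integrable.mono' hbd (hmeas.mono_set Set.Ioc_subset_Ioi_self) ?_
      refine (ae_restrict_iff' measurableSet_Ioc).mpr (Filter.Eventually.of_forall ?_)
      intro z hz
      rw [hnorm z hz.1]
      calc (1 - Real.exp (-z)) * z ^ (s.re + 1)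
          ≤ z * z ^ (s.re + 1) := by
            apply mul_le_mul_of_nonneg_right (hle z hz.1.le)
            exact Real.rpow_nonneg hz.1.le _
        _ = z ^ (s.re + 2) := by
            rw [← Real.rpow_one_add' (le_of_lt hz.1) (by linarith)]
            ring_nf
    · -- on (1,∞): bound by z ^ (s.re + 1)
      have hbd : IntegrableOn (fun z : ℝ => z ^ (s.re + 1)) (Set.Ioi 1) :=
        integrableOn_Ioi_rpow_of_lt (by linarith) one_pos
      refine Integrable.mono' hbd (hmeas.mono_set (Set.Ioi_subset_Ioi zero_le_one)) ?_
      refine (ae_restrict_iff' measurableSet_Ioi).mpr (Filter.Eventually.of_forall ?_)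
      intro z hz
      have hz0 : (0:ℝ) < z := lt_trans one_pos hz
      rw [hnorm z hz0]
      calc (1 - Real.exp (-z)) * z ^ (s.re + 1)
          ≤ 1 * z ^ (s.re + 1) := by
            apply mul_le_mul_of_nonneg_right (h1e z hz0.le)
            exact Real.rpow_nonneg hz0.le _
        _ = z ^ (s.re + 1) := one_mul _
  refine ⟨hint, ?_⟩
  -- the antiderivative
  set F : ℝ → ℂ := fun z : ℝ => ((1 - Real.exp (-z) : ℝ) : ℂ) * ((z : ℂ) ^ (s + 2) / (s + 2))
    with hF
  set g : ℝ → ℂ := fun z : ℝ => ((Real.exp (-z) : ℝ) : ℂ) * ((z : ℂ) ^ (s + 2) / (s + 2))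
    with hg
  -- g is integrable (Gamma integral) and ∫ g = Γ(s+2)
  have hgint : IntegrableOn g (Set.Ioi 0) := by
    have := (Complex.GammaIntegral_convergent (s := s + 3) (by simp [Complex.add_re]; linarith))
    have h2 : (fun x : ℝ => ((Real.exp (-x) : ℝ) : ℂ) * (x:ℂ) ^ (s + 3 - 1)) =
        (fun x : ℝ => ((Real.exp (-x) : ℝ) : ℂ) * (x:ℂ) ^ (s + 2)) := by
      funext x; ring_nf
    rw [h2] at this
    exact IntegrableOn.congr_fun (this.div_const (s + 2)) (fun x _ => by rw [hg]; ring) measurableSet_Ioi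
  have hgval : (∫ z : ℝ in Set.Ioi 0, g z) = Complex.Gamma (s + 2) := by
    have h3 : Complex.Gamma (s + 3) = (s + 2) * Complex.Gamma (s + 2) := by
      have := Complex.Gamma_add_one (s + 2) hs20
      rw [show s + 2 + 1 = s + 3 by ring] at this
      exact this
    have h4 : Complex.Gamma (s + 3) = ∫ x : ℝ in Set.Ioi 0,
        ((Real.exp (-x) : ℝ) : ℂ) * (x:ℂ) ^ (s + 2) := by
      rw [Complex.Gamma_eq_integral (by simp [Complex.add_re]; linarith)]
      unfold Complex.GammaIntegral
      congr 1
      funext x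
      rw [show s + 3 - 1 = s + 2 by ring]
    have : (∫ z : ℝ in Set.Ioi 0, g z) =
        (∫ x : ℝ in Set.Ioi 0, ((Real.exp (-x) : ℝ) : ℂ) * (x:ℂ) ^ (s + 2)) / (s + 2) := by
      rw [← integral_div]
      congr 1
      funext z
      rw [hg]; ring
    rw [this, ← h4, h3]
    field_simp
  -- derivative of F
  have hderiv : ∀ z ∈ Set.Ioi (0:ℝ), HasDerivAt F (g z + f z) z := by
    intro z hz
    have hz0 : (0:ℝ) < z := hz
    have hd1 : HasDerivAt (fun y : ℝ => ((1 - Real.exp (-y) : ℝ) : ℂ))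
        ((Real.exp (-z) : ℝ) : ℂ) z := by
      have : HasDerivAt (fun y : ℝ => 1 - Real.exp (-y)) (Real.exp (-z)) z := by
        have h := (Real.hasDerivAt_exp (-z)).comp z (hasDerivAt_neg z)
        have h2 := h.const_sub 1
        simpa using h2
      exact this.ofReal_comp
    have hd2 : HasDerivAt (fun y : ℝ => (y : ℂ) ^ (s + 2) / (s + 2)) ((z : ℂ) ^ (s + 1)) z := by
      have hr : s + 1 ≠ -1 := by
        intro h
        have := congrArg Complex.re h
        simp [Complex.add_re] at this
        linarith
      have := hasDerivAt_ofReal_cpow_const' (ne_of_gt hz0) hr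
      rw [show s + 1 + 1 = s + 2 by ring] at this
      exact this
    have := hd1.mul hd2
    rw [hF]
    convert this using 1
    all_goals rfl
  -- limit of F at infinity is 0
  have htop : Filter.Tendsto F Filter.atTop (nhds 0) := by
    apply squeeze_zero_norm' (a := fun z : ℝ => z ^ (s.re + 2) / ‖(s+2 : ℂ)‖)
    · filter_upwards [Filter.eventually_gt_atTop (0:ℝ)] with z hz
      rw [hF]
      simp only
      rw [norm_mul, norm_div, Complex.norm_real, Real.norm_eq_abs,
        abs_of_nonneg (h0e z hz.le),
        Complex.norm_cpow_eq_rpow_re_of_pos hz]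
      have h1 : (1 - Real.exp (-z)) ≤ 1 := h1e z hz.le
      have h2 : (0:ℝ) ≤ z ^ (s + 2).re / ‖s + 2‖ := by
        apply div_nonneg (Real.rpow_nonneg hz.le _) (norm_nonneg _)
      calc (1 - Real.exp (-z)) * (z ^ (s + 2).re / ‖s + 2‖)
          ≤ 1 * (z ^ (s + 2).re / ‖s + 2‖) :=
            mul_le_mul_of_nonneg_right h1 h2
        _ = z ^ (s.re + 2) / ‖(s + 2 : ℂ)‖ := by
            simp [Complex.add_re]
    · have : Filter.Tendsto (fun z : ℝ => z ^ (s.re + 2)) Filter.atTop (nhds 0) := by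
        have := tendsto_rpow_neg_atTop (y := -(s.re + 2)) (by linarith)
        simpa using this
      simpa using this.div_const ‖(s+2 : ℂ)‖
  -- continuity of F at 0 from the right
  have hF0 : F 0 = 0 := by
    rw [hF]; simp
  have hcont : ContinuousWithinAt F (Set.Ici 0) 0 := by
    rw [ContinuousWithinAt, hF0]
    apply squeeze_zero_norm' (a := fun z : ℝ => z ^ (s.re + 3) / ‖(s+2 : ℂ)‖)
    · filter_upwards [self_mem_nhdsWithin] with z (hz : z ∈ Set.Ici (0:ℝ))
      rcases eq_or_lt_of_le (Set.mem_Ici.mp hz) with h | h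
      · rw [← h, hF0]
        simp only [norm_zero]
        apply div_nonneg (Real.rpow_nonneg le_rfl _) (norm_nonneg _)
      · rw [hF]
        simp only
        rw [norm_mul, norm_div, Complex.norm_real, Real.norm_eq_abs,
          abs_of_nonneg (h0e z h.le),
          Complex.norm_cpow_eq_rpow_re_of_pos h]
        have h2 : (0:ℝ) ≤ z ^ (s + 2).re / ‖s + 2‖ := by
          apply div_nonneg (Real.rpow_nonneg h.le _) (norm_nonneg _)
        calc (1 - Real.exp (-z)) * (z ^ (s + 2).re / ‖s + 2‖)
            ≤ z * (z ^ (s + 2).re / ‖s + 2‖) :=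
              mul_le_mul_of_nonneg_right (hle z h.le) h2
          _ = z ^ (s.re + 3) / ‖(s + 2 : ℂ)‖ := by
              rw [← mul_div_assoc, ← Real.rpow_one_add' h.le (by simp [Complex.add_re]; linarith)]
              norm_num [Complex.add_re]
              ring_nf
    · have : Filter.Tendsto (fun z : ℝ => z ^ (s.re + 3)) (nhdsWithin 0 (Set.Ici 0)) (nhds 0) := by
        have hc : ContinuousAt (fun z : ℝ => z ^ (s.re + 3)) 0 := by
          apply Real.continuousAt_rpow_const 0 (s.re + 3) (Or.inr (by linarith))
        have := hc.continuousWithinAt (s := Set.Ici (0:ℝ))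
        rw [ContinuousWithinAt] at this
        simpa [Real.zero_rpow (show s.re + 3 ≠ 0 by linarith)] using this
      simpa using this.div_const ‖(s+2 : ℂ)‖
  -- apply FTC on (0, ∞)
  have key := integral_Ioi_of_hasDerivAt_of_tendsto hcont hderiv (hgint.add hint) htop
  rw [hF0, sub_zero] at key
  rw [integral_add hgint hint, hgval] at key
  linear_combination key
end
end

section
/- For every integer k ≥ 0 and every complex s with −3 < Re s < −2, the integral ∫_0^∞ e^{−z/2}·(1 − e^{−z/2^{k+1}})·z^{s+1} dz converges absolutely and equals 2^{s+2}·Γ(s+2)·(1 − (1 + 1/2^k)^{−(s+2)}). -/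
open MeasureTheory

noncomputable section

open Set

private lemma contOn_cpow (w : ℂ) : ContinuousOn (fun t : ℝ => (t : ℂ) ^ w) (Ioi 0) :=
  fun t ht => (Complex.continuousAt_ofReal_cpow_const t w (Or.inr (ne_of_gt ht))).continuousWithinAt

private lemma aux_int {w : ℂ} (hw1 : -1 < w.re) (hw2 : w.re < 0) {r : ℝ} (hr : 0 < r) :
    IntegrableOn (fun t : ℝ => (t : ℂ) ^ w * Complex.exp (-(r * t))) (Set.Ioi 0) := by
  have hmeas : ContinuousOn (fun t : ℝ => (t : ℂ) ^ w * Complex.exp (-(r * t))) (Ioi 0) := by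
    refine (contOn_cpow w).mul (Continuous.continuousOn (by continuity))
  have hnorm : ∀ t : ℝ, 0 < t →
      ‖(t : ℂ) ^ w * Complex.exp (-(r * t))‖ = t ^ w.re * Real.exp (-(r * t)) := by
    intro t ht
    rw [norm_mul,
      Complex.norm_cpow_eq_rpow_re_of_pos ht, Complex.norm_exp]
    norm_num
  have h01 : IntegrableOn (fun t : ℝ => (t : ℂ) ^ w * Complex.exp (-(r * t))) (Ioc 0 1) := by
    refine Integrable.mono' (g := fun t : ℝ => t ^ w.re) ?_ ?_ ?_
    · have h := intervalIntegral.intervalIntegrable_rpow' (r := w.re) (a := 0) (b := 1) hw1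
      rwa [intervalIntegrable_iff_integrableOn_Ioc_of_le zero_le_one] at h
    · exact ((hmeas.mono Ioc_subset_Ioi_self).aestronglyMeasurable measurableSet_Ioc)
    · refine (ae_restrict_iff' measurableSet_Ioc).2 (.of_forall fun t ht => ?_)
      rw [hnorm t ht.1]
      calc t ^ w.re * Real.exp (-(r * t)) ≤ t ^ w.re * 1 := by
            refine mul_le_mul_of_nonneg_left ?_ (Real.rpow_nonneg ht.1.le _)
            exact Real.exp_le_one_iff.2 (by nlinarith [ht.1.le])
        _ = t ^ w.re := mul_one _
  have h1 : IntegrableOn (fun t : ℝ => (t : ℂ) ^ w * Complex.exp (-(r * t))) (Ioi 1) := by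
    refine Integrable.mono' (g := fun t : ℝ => Real.exp (-r * t)) ?_ ?_ ?_
    · exact exp_neg_integrableOn_Ioi 1 hr
    · exact ((hmeas.mono (t := Ioi 1) fun t ht => lt_trans one_pos ht).aestronglyMeasurable measurableSet_Ioi)
    · refine (ae_restrict_iff' measurableSet_Ioi).2 (.of_forall fun t ht => ?_)
      have ht0 : (0:ℝ) < t := lt_trans one_pos ht
      rw [hnorm t ht0]
      show t ^ w.re * Real.exp (-(r * t)) ≤ Real.exp (-r * t)
      rw [neg_mul]
      calc t ^ w.re * Real.exp (-(r * t)) ≤ 1 * Real.exp (-(r * t)) := by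
            refine mul_le_mul_of_nonneg_right ?_ (Real.exp_pos _).le
            exact Real.rpow_le_one_of_one_le_of_nonpos (le_of_lt ht) hw2.le
        _ = Real.exp (-(r * t)) := one_mul _
  have h := h01.union h1
  rwa [Set.Ioc_union_Ioi_eq_Ioi zero_le_one] at h

private lemma exp_diff_le {u v : ℝ} (hu : 0 ≤ u) (huv : u ≤ v) :
    Real.exp (-u) - Real.exp (-v) ≤ v - u := by
  have h1 : Real.exp (-v) = Real.exp (-u) * Real.exp (-(v - u)) := by
    rw [← Real.exp_add]; ring_nf
  have h2 : -(v - u) + 1 ≤ Real.exp (-(v - u)) := Real.add_one_le_exp _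
  have h3 : Real.exp (-u) ≤ 1 := Real.exp_le_one_iff.2 (by linarith)
  nlinarith [Real.exp_pos (-u), Real.exp_pos (-(v - u))]

private lemma aux_int2 {w : ℂ} (hw1 : -2 < w.re) (hw2 : w.re < -1) {b d : ℝ} (hb : 0 < b)
    (hbd : b ≤ d) (hd1 : d - b ≤ 1) :
    IntegrableOn (fun t : ℝ =>
      ((Real.exp (-(b * t)) - Real.exp (-(d * t)) : ℝ) : ℂ) * (t : ℂ) ^ w) (Set.Ioi 0) := by
  have hmeas : ContinuousOn (fun t : ℝ =>
      ((Real.exp (-(b * t)) - Real.exp (-(d * t)) : ℝ) : ℂ) * (t : ℂ) ^ w) (Ioi 0) :=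
    (Continuous.continuousOn (by continuity)).mul (contOn_cpow w)
  have hnorm : ∀ t : ℝ, 0 < t →
      ‖((Real.exp (-(b * t)) - Real.exp (-(d * t)) : ℝ) : ℂ) * (t : ℂ) ^ w‖
        = (Real.exp (-(b * t)) - Real.exp (-(d * t))) * t ^ w.re := by
    intro t ht
    have hnn : 0 ≤ Real.exp (-(b * t)) - Real.exp (-(d * t)) := by
      have : Real.exp (-(d * t)) ≤ Real.exp (-(b * t)) :=
        Real.exp_le_exp.2 (by nlinarith)
      linarith
    rw [norm_mul,
      Complex.norm_cpow_eq_rpow_re_of_pos ht, Complex.norm_real, Real.norm_eq_abs, abs_of_nonneg hnn]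
  have h01 : IntegrableOn (fun t : ℝ =>
      ((Real.exp (-(b * t)) - Real.exp (-(d * t)) : ℝ) : ℂ) * (t : ℂ) ^ w) (Ioc 0 1) := by
    refine Integrable.mono' (g := fun t : ℝ => t ^ (w.re + 1)) ?_ ?_ ?_
    · have h := intervalIntegral.intervalIntegrable_rpow' (r := w.re + 1) (a := 0) (b := 1)
        (by linarith)
      rwa [intervalIntegrable_iff_integrableOn_Ioc_of_le zero_le_one] at h
    · exact ((hmeas.mono Ioc_subset_Ioi_self).aestronglyMeasurable measurableSet_Ioc)
    · refine (ae_restrict_iff' measurableSet_Ioc).2 (.of_forall fun t ht => ?_)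
      rw [hnorm t ht.1]
      have key : Real.exp (-(b * t)) - Real.exp (-(d * t)) ≤ t := by
        have := exp_diff_le (u := b * t) (v := d * t) (mul_nonneg hb.le ht.1.le)
          (by nlinarith [ht.1.le])
        nlinarith [ht.1.le]
      calc (Real.exp (-(b * t)) - Real.exp (-(d * t))) * t ^ w.re
          ≤ t * t ^ w.re := mul_le_mul_of_nonneg_right key (Real.rpow_nonneg ht.1.le _)
        _ = t ^ (w.re + 1) := by
            rw [Real.rpow_add ht.1, Real.rpow_one]; ring
  have h1 : IntegrableOn (fun t : ℝ =>
      ((Real.exp (-(b * t)) - Real.exp (-(d * t)) : ℝ) : ℂ) * (t : ℂ) ^ w) (Ioi 1) := by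
    refine Integrable.mono' (g := fun t : ℝ => Real.exp (-b * t)) ?_ ?_ ?_
    · exact exp_neg_integrableOn_Ioi 1 hb
    · exact ((hmeas.mono (t := Ioi 1) fun t ht => lt_trans one_pos ht).aestronglyMeasurable measurableSet_Ioi)
    · refine (ae_restrict_iff' measurableSet_Ioi).2 (.of_forall fun t ht => ?_)
      have ht0 : (0:ℝ) < t := lt_trans one_pos ht
      rw [hnorm t ht0]
      show (Real.exp (-(b * t)) - Real.exp (-(d * t))) * t ^ w.re ≤ Real.exp (-b * t)
      rw [neg_mul]
      calc (Real.exp (-(b * t)) - Real.exp (-(d * t))) * t ^ w.re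
          ≤ Real.exp (-(b * t)) * 1 := by
            refine mul_le_mul ?_ ?_ (Real.rpow_nonneg ht0.le _) (Real.exp_pos _).le
            · linarith [Real.exp_pos (-(d * t))]
            · exact Real.rpow_le_one_of_one_le_of_nonpos (le_of_lt ht) (by linarith)
        _ = Real.exp (-(b * t)) := mul_one _
  have h := h01.union h1
  rwa [Set.Ioc_union_Ioi_eq_Ioi zero_le_one] at h

/-- For every `k ≥ 0` and `−3 < Re s < −2`, the integral
`∫_0^∞ e^{−z/2} (1 − e^{−z/2^{k+1}}) z^{s+1} dz` converges absolutely and equals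
`2^{s+2} Γ(s+2) (1 − (1 + 1/2^k)^{−(s+2)})`. -/
theorem integral_exp_half_one_sub_exp (k : ℕ) (s : ℂ) (hs₁ : -3 < s.re)
    (hs₂ : s.re < -2) :
    IntegrableOn
      (fun z : ℝ =>
        ((Real.exp (-z / 2) * (1 - Real.exp (-z / 2 ^ (k + 1))) : ℝ) : ℂ) *
          (z : ℂ) ^ (s + 1))
      (Set.Ioi 0) ∧
    (∫ z : ℝ in Set.Ioi 0,
        ((Real.exp (-z / 2) * (1 - Real.exp (-z / 2 ^ (k + 1))) : ℝ) : ℂ) *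
          (z : ℂ) ^ (s + 1)) =
      (2 : ℂ) ^ (s + 2) * Complex.Gamma (s + 2) *
        (1 - ((1 + 1 / 2 ^ k : ℂ)) ^ (-(s + 2))) := by
  have h2k1 : (0:ℝ) < (2:ℝ) ^ (k+1) := by positivity
  set b : ℝ := 1/2 with hb_def
  set d : ℝ := 1/2 + 1/(2:ℝ)^(k+1) with hd_def
  have hb : (0:ℝ) < b := by rw [hb_def]; norm_num
  have hd : (0:ℝ) < d := by rw [hd_def]; positivity
  have hbd : b ≤ d := by
    have : (0:ℝ) < 1/(2:ℝ)^(k+1) := by positivity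
    rw [hb_def, hd_def]; linarith
  have hd1 : d - b ≤ 1 := by
    have h1 : (1:ℝ) ≤ 2^(k+1) := one_le_pow₀ (by norm_num)
    rw [hb_def, hd_def]
    have : 1/(2:ℝ)^(k+1) ≤ 1 := by
      rw [div_le_one h2k1]; exact h1
    linarith
  -- rewrite the integrand
  have hfun : (fun z : ℝ =>
        ((Real.exp (-z / 2) * (1 - Real.exp (-z / 2 ^ (k + 1))) : ℝ) : ℂ) * (z:ℂ) ^ (s+1))
      = fun z : ℝ => ((Real.exp (-(b*z)) - Real.exp (-(d*z)) : ℝ) : ℂ) * (z:ℂ) ^ (s+1) := by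
    funext z
    have : Real.exp (-z / 2) * (1 - Real.exp (-z / 2 ^ (k + 1)))
        = Real.exp (-(b*z)) - Real.exp (-(d*z)) := by
      rw [mul_sub, mul_one, ← Real.exp_add, hb_def, hd_def]
      congr 2 <;> ring
    rw [this]
  rw [hfun]
  -- real part bounds
  have hw1' : -2 < (s+1).re := by simp [Complex.add_re]; linarith
  have hw2' : (s+1).re < -1 := by simp [Complex.add_re]; linarith
  have hw1'' : -1 < (s+2).re := by simp [Complex.add_re]; linarith
  have hw2'' : (s+2).re < 0 := by simp [Complex.add_re]; linarith
  have h3re : 0 < (s+3).re := by simp [Complex.add_re]; linarith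
  have hs2ne : s + 2 ≠ 0 := by
    intro h
    have := congrArg Complex.re h
    simp [Complex.add_re] at this; linarith
  have hs1ne : s + 1 ≠ -1 := by
    intro h
    have := congrArg Complex.re h
    simp [Complex.add_re] at this; linarith
  have hInt : IntegrableOn (fun z : ℝ =>
      ((Real.exp (-(b*z)) - Real.exp (-(d*z)) : ℝ) : ℂ) * (z:ℂ) ^ (s+1)) (Set.Ioi 0) :=
    aux_int2 hw1' hw2' hb hbd hd1
  refine ⟨hInt, ?_⟩
  -- the Mellin integrals
  have mell : ∀ r : ℝ, 0 < r →
      (∫ t in Set.Ioi (0:ℝ), (t:ℂ)^(s+2) * Complex.exp (-(r * t)))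
        = (1/(r:ℂ))^(s+3) * Complex.Gamma (s+3) := by
    intro r hr
    have h := Complex.integral_cpow_mul_exp_neg_mul_Ioi (a := s+3) (r := r) h3re hr
    rw [show s+3-1 = s+2 by ring] at h
    exact h
  -- derivative data
  set F : ℝ → ℂ := fun z =>
    ((Real.exp (-(b*z)) - Real.exp (-(d*z)) : ℝ) : ℂ) * ((z:ℂ)^(s+2)/(s+2)) with hF_def
  set G₁ : ℝ → ℂ := fun z =>
    ((d * Real.exp (-(d*z)) - b * Real.exp (-(b*z)) : ℝ) : ℂ) * ((z:ℂ)^(s+2)/(s+2)) with hG1_def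
  have hIb := (aux_int hw1'' hw2'' hb).const_mul ((b:ℝ):ℂ)
  have hId := (aux_int hw1'' hw2'' hd).const_mul ((d:ℝ):ℂ)
  have hG₁eq : G₁ = fun z : ℝ => (s+2)⁻¹ *
      ((d:ℂ) * ((z:ℂ)^(s+2) * Complex.exp (-((d:ℂ) * (z:ℂ)))) -
       (b:ℂ) * ((z:ℂ)^(s+2) * Complex.exp (-((b:ℂ) * (z:ℂ))))) := by
    funext z
    rw [hG1_def]
    push_cast
    ring
  have hG₁int : IntegrableOn G₁ (Set.Ioi 0) := by
    rw [hG₁eq]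
    exact ((hId.sub hIb).const_mul ((s+2)⁻¹)).congr
      (Filter.EventuallyEq.of_eq (funext fun z => by simp only [Pi.sub_apply]))
  have hderiv : ∀ x ∈ Set.Ioi (0:ℝ), HasDerivAt F
      (G₁ x + ((Real.exp (-(b*x)) - Real.exp (-(d*x)) : ℝ) : ℂ) * (x:ℂ) ^ (s+1)) x := by
    intro x hx
    have hu : HasDerivAt (fun z : ℝ => Real.exp (-(b*z)) - Real.exp (-(d*z)))
        (d * Real.exp (-(d*x)) - b * Real.exp (-(b*x))) x := by
      have h1 : HasDerivAt (fun z : ℝ => Real.exp (-(b*z))) (Real.exp (-(b*x)) * -(b*1)) x :=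
        (((hasDerivAt_id x).const_mul b).neg).exp
      have h2 : HasDerivAt (fun z : ℝ => Real.exp (-(d*z))) (Real.exp (-(d*x)) * -(d*1)) x :=
        (((hasDerivAt_id x).const_mul d).neg).exp
      exact (h1.sub h2).congr_deriv (by ring)
    have hv : HasDerivAt (fun z : ℝ => ((z:ℂ)^(s+2)/(s+2))) ((x:ℂ)^(s+1)) x := by
      have h := hasDerivAt_ofReal_cpow_const' (ne_of_gt (mem_Ioi.1 hx)) hs1ne
      convert h using 2 <;> ring
    exact (hu.ofReal_comp).mul hv
  have hF0 : F 0 = 0 := by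
    rw [hF_def]; simp
  have normF : ∀ z : ℝ, 0 < z → ‖F z‖
      = |Real.exp (-(b*z)) - Real.exp (-(d*z))| * (z ^ (s.re+2) / ‖s+2‖) := by
    intro z hz
    rw [hF_def]
    rw [norm_mul, norm_div,
      Complex.norm_cpow_eq_rpow_re_of_pos hz, Complex.norm_real, Real.norm_eq_abs]
    simp [Complex.add_re]
  have habs : ∀ z : ℝ, 0 ≤ z → |Real.exp (-(b*z)) - Real.exp (-(d*z))|
      = Real.exp (-(b*z)) - Real.exp (-(d*z)) := by
    intro z hz
    refine abs_of_nonneg ?_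
    have : Real.exp (-(d*z)) ≤ Real.exp (-(b*z)) := Real.exp_le_exp.2 (by nlinarith)
    linarith
  have hcont : ContinuousWithinAt F (Set.Ici 0) 0 := by
    have key : Filter.Tendsto F (nhdsWithin 0 (Set.Ici 0)) (nhds 0) := by
      refine squeeze_zero_norm' (a := fun z : ℝ => z ^ (s.re+3) / ‖s+2‖) ?_ ?_
      · filter_upwards [eventually_mem_nhdsWithin] with z (hz : z ∈ Set.Ici (0:ℝ))
        rcases eq_or_lt_of_le (Set.mem_Ici.1 hz) with h0 | h0
        · rw [← h0, hF0]
          simp [Real.zero_rpow (by linarith : s.re + 3 ≠ 0)]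
        · rw [normF z h0, habs z h0.le]
          have h1 : Real.exp (-(b*z)) - Real.exp (-(d*z)) ≤ z := by
            have := exp_diff_le (mul_nonneg hb.le h0.le)
              (by nlinarith : b * z ≤ d * z)
            nlinarith
          calc (Real.exp (-(b*z)) - Real.exp (-(d*z))) * (z ^ (s.re+2) / ‖s+2‖)
              ≤ z * (z ^ (s.re+2) / ‖s+2‖) := by
                refine mul_le_mul_of_nonneg_right h1 (by positivity)
            _ = z ^ (s.re+3) / ‖s+2‖ := by
                have hzz : z ^ (s.re+2+1) = z ^ (s.re+2) * z ^ (1:ℝ) :=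
                  Real.rpow_add h0 _ _
                rw [Real.rpow_one] at hzz
                rw [show s.re + 3 = s.re+2+1 by ring, hzz]
                ring
      · have hc : Filter.Tendsto (fun z : ℝ => z ^ (s.re+3) / ‖s+2‖) (nhds 0)
            (nhds ((0:ℝ) ^ (s.re+3) / ‖s+2‖)) :=
          ((Real.continuousAt_rpow_const 0 (s.re+3) (Or.inr (by linarith))).div_const _)
        rw [Real.zero_rpow (by linarith : s.re + 3 ≠ 0), zero_div] at hc
        exact hc.mono_left nhdsWithin_le_nhds
    have : ContinuousWithinAt F (Set.Ici 0) 0 ↔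
        Filter.Tendsto F (nhdsWithin 0 (Set.Ici 0)) (nhds (F 0)) := Iff.rfl
    rw [this, hF0]
    exact key
  have hTop : Filter.Tendsto F Filter.atTop (nhds 0) := by
    refine squeeze_zero_norm' (a := fun z : ℝ => Real.exp (-(b*z)) / ‖s+2‖) ?_ ?_
    · filter_upwards [Filter.eventually_ge_atTop (1:ℝ)] with z hz
      have h0 : (0:ℝ) < z := lt_of_lt_of_le one_pos hz
      rw [normF z h0, habs z h0.le]
      calc (Real.exp (-(b*z)) - Real.exp (-(d*z))) * (z ^ (s.re+2) / ‖s+2‖)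
          ≤ Real.exp (-(b*z)) * (1 / ‖s+2‖) := by
            refine mul_le_mul ?_ ?_ (by positivity) (Real.exp_pos _).le
            · linarith [Real.exp_pos (-(d*z))]
            · gcongr
              exact Real.rpow_le_one_of_one_le_of_nonpos hz (by linarith)
        _ = Real.exp (-(b*z)) / ‖s+2‖ := by ring
    · have h1 : Filter.Tendsto (fun z : ℝ => b*z) Filter.atTop Filter.atTop :=
        Filter.Tendsto.const_mul_atTop hb Filter.tendsto_id
      have h2 : Filter.Tendsto (fun z : ℝ => Real.exp (-(b*z))) Filter.atTop (nhds 0) :=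
        Real.tendsto_exp_atBot.comp (Filter.tendsto_neg_atBot_iff.2 h1)
      have h3 := h2.div_const ‖s+2‖
      rwa [zero_div] at h3
  -- FTC
  have hFTC := integral_Ioi_of_hasDerivAt_of_tendsto hcont hderiv (hG₁int.add hInt) hTop
  rw [hF0, sub_zero] at hFTC
  have hsplit : (∫ x in Set.Ioi (0:ℝ), (G₁ x +
      ((Real.exp (-(b*x)) - Real.exp (-(d*x)) : ℝ) : ℂ) * (x:ℂ) ^ (s+1)))
      = (∫ x in Set.Ioi (0:ℝ), G₁ x) + ∫ x in Set.Ioi (0:ℝ),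
        ((Real.exp (-(b*x)) - Real.exp (-(d*x)) : ℝ) : ℂ) * (x:ℂ) ^ (s+1) :=
    integral_add hG₁int hInt
  rw [hsplit] at hFTC
  have hmain : (∫ x in Set.Ioi (0:ℝ),
      ((Real.exp (-(b*x)) - Real.exp (-(d*x)) : ℝ) : ℂ) * (x:ℂ) ^ (s+1))
      = -(∫ x in Set.Ioi (0:ℝ), G₁ x) := by
    linear_combination hFTC
  rw [hmain]
  -- compute ∫ G₁
  have hIG : (∫ x in Set.Ioi (0:ℝ), G₁ x) = (s+2)⁻¹ *
      ((d:ℂ) * ((1/(d:ℂ))^(s+3) * Complex.Gamma (s+3)) -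
       (b:ℂ) * ((1/(b:ℂ))^(s+3) * Complex.Gamma (s+3))) := by
    rw [hG₁eq, integral_const_mul, integral_sub hId hIb, integral_const_mul,
      integral_const_mul, mell d hd, mell b hb]
  -- final algebra
  have hgam : Complex.Gamma (s+3) = (s+2) * Complex.Gamma (s+2) := by
    have := Complex.Gamma_add_one (s+2) hs2ne
    rw [show s+2+1 = s+3 by ring] at this
    exact this
  have hbval : ((b:ℝ):ℂ) = 2⁻¹ := by rw [hb_def]; push_cast; norm_num
  have hdne : ((d:ℝ):ℂ) ≠ 0 := Complex.ofReal_ne_zero.2 hd.ne'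
  have hdterm : ((d:ℝ):ℂ) * (1/(d:ℂ))^(s+3) = ((d:ℝ):ℂ) ^ (-(s+2)) := by
    rw [one_div, Complex.inv_cpow _ _ (by rw [Complex.arg_ofReal_of_nonneg hd.le]; exact ne_of_lt Real.pi_pos),
      ← Complex.cpow_neg]
    nth_rewrite 1 [← Complex.cpow_one ((d:ℝ):ℂ)]
    rw [← Complex.cpow_add _ _ hdne]
    congr 1; ring
  have hbterm : ((b:ℝ):ℂ) * (1/(b:ℂ))^(s+3) = (2:ℂ) ^ (s+2) := by
    rw [hbval]
    rw [show (1/(2⁻¹:ℂ)) = 2 by norm_num]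
    rw [show s+3 = (s+2)+1 by ring, Complex.cpow_add _ _ (two_ne_zero), Complex.cpow_one]
    ring
  have hck : ((1:ℂ) + 1/2^k) = ((2*d : ℝ) : ℂ) := by
    rw [hd_def]; push_cast
    rw [pow_succ]
    field_simp
  have h2d : ((2*d : ℝ) : ℂ) ^ (-(s+2)) = (2:ℂ) ^ (-(s+2)) * ((d:ℝ):ℂ) ^ (-(s+2)) := by
    rw [Complex.ofReal_mul, Complex.mul_cpow_ofReal_nonneg (by norm_num) hd.le]
    norm_num
  have h2cancel : (2:ℂ) ^ (s+2) * (2:ℂ) ^ (-(s+2)) = 1 := by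
    rw [← Complex.cpow_add _ _ (two_ne_zero), add_neg_cancel, Complex.cpow_zero]
  have hinv : (s+2)⁻¹ * (s+2) = 1 := inv_mul_cancel₀ hs2ne
  rw [hIG, hgam, hck, h2d]
  rw [show ((d:ℝ):ℂ) * ((1/(d:ℂ))^(s+3) * ((s+2) * Complex.Gamma (s+2)))
      = (((d:ℝ):ℂ) * (1/(d:ℂ))^(s+3)) * ((s+2) * Complex.Gamma (s+2)) by ring]
  rw [show ((b:ℝ):ℂ) * ((1/(b:ℂ))^(s+3) * ((s+2) * Complex.Gamma (s+2)))
      = (((b:ℝ):ℂ) * (1/(b:ℂ))^(s+3)) * ((s+2) * Complex.Gamma (s+2)) by ring]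
  rw [hdterm, hbterm]
  linear_combination (Complex.Gamma (s+2) * ((2:ℂ)^(s+2) - ((d:ℝ):ℂ)^(-(s+2)))) * hinv +
    (Complex.Gamma (s+2) * ((d:ℝ):ℂ)^(-(s+2))) * h2cancel
end
end

section
/- For every complex s with −3 < Re s < −2, the integral ∫_0^∞ z^{s+1}·(1 − e^{−z})² dz converges absolutely and equals (1 − 2^{s+3})·Γ(s+2)/2^{s+2}. -/
open MeasureTheory Set Filter Complex
open scoped Topology

noncomputable section

lemma aux_exp_le_one {x : ℝ} (hx : 0 ≤ x) : Real.exp (-x) ≤ 1 :=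
  Real.exp_le_one_iff.mpr (by linarith)

lemma aux_one_sub_exp_le {x : ℝ} : 1 - Real.exp (-x) ≤ x := by
  have := Real.add_one_le_exp (-x)
  linarith

/-- For `−3 < Re s < −2`, the integral `∫_0^∞ z^{s+1} (1 − e^{−z})² dz` converges
absolutely and equals `(1 − 2^{s+3}) Γ(s+2) / 2^{s+2}`. -/
theorem integral_one_sub_exp_sq (s : ℂ) (hs₁ : -3 < s.re) (hs₂ : s.re < -2) :
    IntegrableOn (fun z : ℝ => (z : ℂ) ^ (s + 1) * ((1 - Real.exp (-z) : ℝ) : ℂ) ^ 2)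
      (Set.Ioi 0) ∧
    (∫ z : ℝ in Set.Ioi 0, (z : ℂ) ^ (s + 1) * ((1 - Real.exp (-z) : ℝ) : ℂ) ^ 2) =
      (1 - (2 : ℂ) ^ (s + 3)) * Complex.Gamma (s + 2) / (2 : ℂ) ^ (s + 2) := by
  have h2 : (s + 2) ≠ 0 := by
    intro h
    have := congrArg Complex.re h
    simp [Complex.add_re] at this
    linarith
  set f : ℝ → ℂ := fun z : ℝ => (z : ℂ) ^ (s + 1) * ((1 - Real.exp (-z) : ℝ) : ℂ) ^ 2 with hf
  -- norm of f on positive reals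
  have hnorm : ∀ z : ℝ, 0 < z → ‖f z‖ = z ^ (s + 1).re * (1 - Real.exp (-z)) ^ 2 := by
    intro z hz
    have h1 : (0:ℝ) ≤ 1 - Real.exp (-z) := by
      have := aux_exp_le_one hz.le; linarith
    simp only [hf, norm_mul, norm_pow, Real.norm_eq_abs,
      Complex.norm_cpow_eq_rpow_re_of_pos hz, Complex.norm_real, _root_.abs_of_nonneg h1]
  have hfcont : ContinuousOn f (Ioi 0) := by
    intro x hx
    apply ContinuousWithinAt.mul
    · exact ((Complex.continuous_ofReal.continuousAt.cpow continuousAt_const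
        (Or.inl (by simpa using (mem_Ioi.mp hx))))).continuousWithinAt
    · exact (Continuous.continuousWithinAt (by continuity))
  have hfmeas : AEStronglyMeasurable f (volume.restrict (Ioi 0)) :=
    hfcont.aestronglyMeasurable measurableSet_Ioi
  -- integrability of f
  have hint : IntegrableOn f (Ioi 0) := by
    have h01 : IntegrableOn f (Ioc 0 1) := by
      have hb : IntegrableOn (fun z : ℝ => z ^ (s.re + 3)) (Ioc 0 1) := by
        have := intervalIntegral.intervalIntegrable_rpow' (a := 0) (b := 1)
          (show (-1:ℝ) < s.re + 3 by linarith)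
        exact (intervalIntegrable_iff_integrableOn_Ioc_of_le (by norm_num)).mp this
      refine Integrable.mono' hb (hfmeas.mono_set Ioc_subset_Ioi_self) ?_
      filter_upwards [ae_restrict_mem measurableSet_Ioc] with z hz
      obtain ⟨hz0, hz1⟩ := hz
      rw [hnorm z hz0]
      have h1 : (0:ℝ) ≤ 1 - Real.exp (-z) := by
        have := aux_exp_le_one hz0.le; linarith
      have h2' : (1 - Real.exp (-z)) ^ 2 ≤ z ^ 2 :=
        pow_le_pow_left₀ h1 aux_one_sub_exp_le 2
      calc z ^ (s + 1).re * (1 - Real.exp (-z)) ^ 2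
          ≤ z ^ (s + 1).re * z ^ 2 := by
            exact mul_le_mul_of_nonneg_left h2' (Real.rpow_nonneg hz0.le _)
        _ = z ^ (s.re + 3) := by
            rw [← Real.rpow_natCast z 2, ← Real.rpow_add hz0]
            congr 1
            simp [Complex.add_re]
            ring
    have h1i : IntegrableOn f (Ioi 1) := by
      have hb : IntegrableOn (fun z : ℝ => z ^ (s + 1).re) (Ioi 1) :=
        integrableOn_Ioi_rpow_of_lt (by simp [Complex.add_re]; linarith) one_pos
      refine Integrable.mono' hb (hfmeas.mono_set (Ioi_subset_Ioi (by norm_num))) ?_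
      filter_upwards [ae_restrict_mem measurableSet_Ioi] with z hz
      have hz0 : (0:ℝ) < z := lt_trans one_pos hz
      rw [hnorm z hz0]
      have h1 : (0:ℝ) ≤ 1 - Real.exp (-z) := by
        have := aux_exp_le_one hz0.le; linarith
      have h2' : (1 - Real.exp (-z)) ^ 2 ≤ 1 := by
        nlinarith [Real.exp_pos (-z)]
      nth_rewrite 2 [← mul_one (z ^ (s + 1).re)]
      exact mul_le_mul_of_nonneg_left h2' (Real.rpow_nonneg hz0.le _)
    have := h01.union h1i
    rwa [Ioc_union_Ioi_eq_Ioi (by norm_num : (0:ℝ) ≤ 1)] at this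
  refine ⟨hint, ?_⟩
  -- auxiliary integrands
  set h₁ : ℝ → ℂ := fun z : ℝ => (z : ℂ) ^ (s + 2) * Real.exp (-z) with hh₁
  set h₂ : ℝ → ℂ := fun z : ℝ => (z : ℂ) ^ (s + 2) * Real.exp (-(2 * z)) with hh₂
  have hs3 : 0 < (s + 3).re := by simp [Complex.add_re]; linarith
  have h₁int : IntegrableOn h₁ (Ioi 0) := by
    have := Complex.GammaIntegral_convergent hs3
    refine this.congr_fun (fun x hx => ?_) measurableSet_Ioi
    rw [show s + 3 - 1 = s + 2 by ring]
    ring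
  have h₂cont : ContinuousOn h₂ (Ioi 0) := by
    intro x hx
    apply ContinuousWithinAt.mul
    · exact ((Complex.continuous_ofReal.continuousAt.cpow continuousAt_const
        (Or.inl (by simpa using (mem_Ioi.mp hx))))).continuousWithinAt
    · exact (Continuous.continuousWithinAt (by continuity))
  have h₂int : IntegrableOn h₂ (Ioi 0) := by
    refine Integrable.mono' h₁int.norm (h₂cont.aestronglyMeasurable measurableSet_Ioi) ?_
    filter_upwards [ae_restrict_mem measurableSet_Ioi] with z hz
    have hz0 : (0:ℝ) < z := hz
    simp only [hh₁, hh₂, norm_norm, norm_mul, Real.norm_eq_abs, Complex.norm_real,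
      _root_.abs_of_pos (Real.exp_pos _)]
    gcongr
    linarith
  -- values of auxiliary integrals
  have h₁val : (∫ z : ℝ in Ioi 0, h₁ z) = Complex.Gamma (s + 3) := by
    have h := Complex.integral_cpow_mul_exp_neg_mul_Ioi (a := s + 3) (r := 1) hs3 one_pos
    simp only [show s + 3 - 1 = s + 2 by ring] at h
    rw [show ((1:ℝ):ℂ) = 1 by norm_num, one_div, inv_one, Complex.one_cpow, one_mul] at h
    rw [← h]
    refine setIntegral_congr_fun measurableSet_Ioi (fun t ht => ?_)
    simp [hh₁, Complex.ofReal_exp]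
  have h₂val : (∫ z : ℝ in Ioi 0, h₂ z) =
      (1 / 2 : ℂ) ^ (s + 3) * Complex.Gamma (s + 3) := by
    have h := Complex.integral_cpow_mul_exp_neg_mul_Ioi (a := s + 3) (r := 2) hs3 two_pos
    simp only [show s + 3 - 1 = s + 2 by ring] at h
    rw [show ((2:ℝ):ℂ) = 2 by norm_num] at h
    rw [← h]
    refine setIntegral_congr_fun measurableSet_Ioi (fun t ht => ?_)
    simp only [hh₂]
    rw [Complex.ofReal_exp]
    push_cast
    ring_nf
  -- FTC setup
  set u : ℝ → ℝ := fun z => (1 - Real.exp (-z)) ^ 2 with hu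
  set F : ℝ → ℂ := fun z : ℝ => (z : ℂ) ^ (s + 2) / (s + 2) * (u z : ℝ) with hF
  set F' : ℝ → ℂ := fun z : ℝ => f z + (2 / (s + 2)) * (h₁ z - h₂ z) with hF'
  have hud : ∀ x : ℝ, HasDerivAt u (2 * (1 - Real.exp (-x)) * Real.exp (-x)) x := by
    intro x
    have he : HasDerivAt (fun z : ℝ => Real.exp (-z)) (-Real.exp (-x)) x := by
      simpa [Function.comp_def] using (Real.hasDerivAt_exp (-x)).comp x (hasDerivAt_neg x)
    have := ((hasDerivAt_const x (1:ℝ)).sub he).pow 2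
    refine this.congr_deriv (Eq.symm ?_)
    simp only [Pi.sub_apply]
    ring
  have hderiv : ∀ x ∈ Ioi (0:ℝ), HasDerivAt F (F' x) x := by
    intro x hx
    have hx0 : (0:ℝ) < x := hx
    have hG : HasDerivAt (fun y : ℝ => (y : ℂ) ^ (s + 2) / (s + 2)) ((x:ℂ) ^ (s + 1)) x := by
      have h1 : (s + 1) ≠ -1 := by
        intro h
        have := congrArg Complex.re h
        simp [Complex.add_re] at this; linarith
      have := hasDerivAt_ofReal_cpow_const' hx0.ne' h1
      simpa [show s + 1 + 1 = s + 2 by ring] using this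
    have hgc : HasDerivAt (fun z : ℝ => ((u z : ℝ) : ℂ))
        ((2 * (1 - Real.exp (-x)) * Real.exp (-x) : ℝ) : ℂ) x := (hud x).ofReal_comp
    have := hG.mul hgc
    refine this.congr_deriv (Eq.symm ?_)
    simp only [hF', hh₁, hh₂, hf, hu]
    rw [show -(2 * x) = -x + -x by ring, Real.exp_add]
    push_cast
    field_simp
  have hcont : ContinuousWithinAt F (Ici 0) 0 := by
    have hF0 : F 0 = 0 := by simp [hF, hu]
    rw [ContinuousWithinAt, hF0]
    apply squeeze_zero_norm' (a := fun z : ℝ => z ^ (s.re + 4) / ‖(s + 2 : ℂ)‖)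
    · filter_upwards [self_mem_nhdsWithin] with z (hz : (0:ℝ) ≤ z)
      rcases hz.eq_or_lt with h | h
      · subst h
        simp [hF, hu, Real.zero_rpow (show s.re + 4 ≠ 0 by linarith)]
      · have h1 : (0:ℝ) ≤ 1 - Real.exp (-z) := by
          have := aux_exp_le_one hz; linarith
        have h2' : (1 - Real.exp (-z)) ^ 2 ≤ z ^ 2 :=
          pow_le_pow_left₀ h1 aux_one_sub_exp_le 2
        simp only [hF, hu, norm_mul, norm_div, Real.norm_eq_abs,
          Complex.norm_cpow_eq_rpow_re_of_pos h, Complex.norm_real,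
          _root_.abs_of_nonneg (pow_nonneg h1 2)]
        rw [div_mul_eq_mul_div, div_le_div_iff_of_pos_right]
        · calc z ^ (s + 2).re * (1 - Real.exp (-z)) ^ 2
              ≤ z ^ (s + 2).re * z ^ 2 :=
                mul_le_mul_of_nonneg_left h2' (Real.rpow_nonneg hz _)
            _ = z ^ (s.re + 4) := by
                rw [← Real.rpow_natCast z 2, ← Real.rpow_add h]
                congr 1
                simp [Complex.add_re]
                ring
        · simpa using h2
    · have : Tendsto (fun z : ℝ => z ^ (s.re + 4)) (𝓝 0) (𝓝 ((0:ℝ) ^ (s.re + 4))) :=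
        (Real.continuousAt_rpow_const 0 _ (Or.inr (by linarith))).tendsto
      rw [Real.zero_rpow (show s.re + 4 ≠ 0 by linarith)] at this
      simpa using (this.mono_left nhdsWithin_le_nhds).div_const ‖(s + 2 : ℂ)‖
  have htop : Tendsto F atTop (𝓝 0) := by
    apply squeeze_zero_norm' (a := fun z : ℝ => z ^ (s + 2).re / ‖(s + 2 : ℂ)‖)
    · filter_upwards [eventually_ge_atTop (1:ℝ)] with z hz
      have hz0 : (0:ℝ) < z := lt_of_lt_of_le one_pos hz
      have h1 : (0:ℝ) ≤ 1 - Real.exp (-z) := by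
        have := aux_exp_le_one hz0.le; linarith
      have h2' : (1 - Real.exp (-z)) ^ 2 ≤ 1 := by
        nlinarith [Real.exp_pos (-z)]
      simp only [hF, hu, norm_mul, norm_div, Real.norm_eq_abs,
        Complex.norm_cpow_eq_rpow_re_of_pos hz0, Complex.norm_real,
        _root_.abs_of_nonneg (pow_nonneg h1 2)]
      rw [div_mul_eq_mul_div, div_le_div_iff_of_pos_right]
      · nth_rewrite 2 [← mul_one (z ^ (s + 2).re)]
        exact mul_le_mul_of_nonneg_left h2' (Real.rpow_nonneg hz0.le _)
      · simpa using h2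
    · have h4 : Tendsto (fun z : ℝ => z ^ (s + 2).re) atTop (𝓝 0) := by
        have := tendsto_rpow_neg_atTop (show (0:ℝ) < -((s + 2).re) by
          simp [Complex.add_re]; linarith)
        simpa using this
      simpa using h4.div_const ‖(s + 2 : ℂ)‖
  have hrest : IntegrableOn (fun z : ℝ => (2 / (s + 2)) * (h₁ z - h₂ z)) (Ioi 0) :=
    ((h₁int.sub h₂int).const_mul _)
  have hF'int : IntegrableOn F' (Ioi 0) := hint.add hrest
  have hFTC := integral_Ioi_of_hasDerivAt_of_tendsto hcont hderiv hF'int htop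
  have hF0 : F 0 = 0 := by simp [hF, hu]
  rw [hF0, sub_zero] at hFTC
  have hsplit : (∫ z : ℝ in Ioi 0, F' z) =
      (∫ z : ℝ in Ioi 0, f z) + (2 / (s + 2)) * ((∫ z : ℝ in Ioi 0, h₁ z) -
        (∫ z : ℝ in Ioi 0, h₂ z)) := by
    rw [integral_add hint hrest, integral_const_mul, integral_sub h₁int h₂int]
  rw [hFTC] at hsplit
  have hmain : (∫ z : ℝ in Ioi 0, f z) =
      -(2 / (s + 2)) * ((∫ z : ℝ in Ioi 0, h₁ z) - (∫ z : ℝ in Ioi 0, h₂ z)) := by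
    linear_combination -hsplit
  rw [h₁val, h₂val] at hmain
  -- final algebra
  have hGamma : Complex.Gamma (s + 3) = (s + 2) * Complex.Gamma (s + 2) := by
    have := Complex.Gamma_add_one (s + 2) h2
    rwa [show s + 2 + 1 = s + 3 by ring] at this
  have harg : (2 : ℂ).arg ≠ Real.pi := by
    rw [show (2:ℂ) = ((2:ℝ):ℂ) by norm_num, Complex.arg_ofReal_of_nonneg (by norm_num)]
    exact Real.pi_ne_zero.symm
  have hhalf : (1 / 2 : ℂ) ^ (s + 3) = ((2:ℂ) ^ (s + 3))⁻¹ := by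
    rw [show (1 / 2 : ℂ) = (2:ℂ)⁻¹ by norm_num, Complex.inv_cpow _ _ harg]
  have hpow : (2:ℂ) ^ (s + 3) = 2 * (2:ℂ) ^ (s + 2) := by
    rw [show s + 3 = s + 2 + 1 by ring, Complex.cpow_add _ _ two_ne_zero, Complex.cpow_one]
    ring
  have hc : (2:ℂ) ^ (s + 2) ≠ 0 := by
    rw [Complex.cpow_def_of_ne_zero two_ne_zero]
    exact Complex.exp_ne_zero _
  rw [hmain, hhalf, hpow, hGamma]
  have h2c : (2 * (2:ℂ) ^ (s + 2)) ≠ 0 := mul_ne_zero two_ne_zero hc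
  field_simp
  ring
end
end
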